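/- arXiv:2510.21506 — 6 statements merged into one kernel-verified Lean document; each statement's English description precedes it below -/
import Mathlib

section
/- Every countable collection Q of probability measures on {0,1}^ℕ is UME-learnable. -/
open MeasureTheory Filter
open scoped ENNReal

/-- The sup-distance `‖p − q‖_∞ = ⨆ j, |p j − q j|` between two vectors. -/
noncomputable def supDist {ι : Type*} (p q : ι → ℝ) : ℝ := ⨆ j, |p j - q j|

/-- The mean vector of a measure on `{0,1}^ι`: `Mean(μ)_j = μ {x | x j = 1}`. -/
noncomputable def meanVec {ι : Type*} (μ : Measure (ι → Bool)) : ι → ℝ :=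
  fun j => (μ {x | x j = true}).toReal

namespace UMEAux

open ProbabilityTheory

/-- Bernoulli coordinate function. -/
noncomputable def bern (j : ℕ) (x : ℕ → Bool) : ℝ := if x j then 1 else 0

lemma measurable_bern (j : ℕ) : Measurable (bern j) := by
  have h : MeasurableSet {x : ℕ → Bool | x j = true} := by
    exact (measurable_pi_apply (X := fun _ : ℕ => Bool) j) (measurableSet_singleton true)
  exact Measurable.ite h measurable_const measurable_const

lemma bern_sq (j : ℕ) (x : ℕ → Bool) : bern j x ^ 2 = bern j x := by
  unfold bern; split <;> norm_num

lemma bern_nonneg (j : ℕ) (x : ℕ → Bool) : 0 ≤ bern j x := by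
  unfold bern; split <;> norm_num

lemma bern_le_one (j : ℕ) (x : ℕ → Bool) : bern j x ≤ 1 := by
  unfold bern; split <;> norm_num

lemma integral_bern (μ : Measure (ℕ → Bool)) [IsProbabilityMeasure μ] (j : ℕ) :
    ∫ x, bern j x ∂μ = meanVec μ j := by
  have h : MeasurableSet {x : ℕ → Bool | x j = true} := by
    exact (measurable_pi_apply (X := fun _ : ℕ => Bool) j) (measurableSet_singleton true)
  have : bern j = Set.indicator {x : ℕ → Bool | x j = true} (fun _ => (1:ℝ)) := by
    funext x
    by_cases hx : x j <;> simp [bern, hx, Set.indicator_apply]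
  rw [this, integral_indicator_const (1:ℝ) h, smul_eq_mul, mul_one, meanVec, Measure.real]

/-- The empirical mean at coordinate `j`. -/
noncomputable def phat (n : ℕ) (S : Fin n → (ℕ → Bool)) (j : ℕ) : ℝ :=
  (∑ i, bern j (S i)) / n

lemma measurable_phat (n j : ℕ) : Measurable fun S : Fin n → (ℕ → Bool) => phat n S j := by
  apply Measurable.div_const
  exact Finset.measurable_sum _ fun i _ => (measurable_bern j).comp (measurable_pi_apply i)

lemma pi_eval_apply {n : ℕ} (μ : Measure (ℕ → Bool)) [IsProbabilityMeasure μ] (i : Fin n)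
    {B : Set (ℕ → Bool)} (_hB : MeasurableSet B) :
    Measure.pi (fun _ : Fin n => μ) ((fun S => S i) ⁻¹' B) = μ B := by
  classical
  have h : (fun S : Fin n → (ℕ → Bool) => S i) ⁻¹' B
      = Set.pi Set.univ (Function.update (fun _ : Fin n => (Set.univ : Set (ℕ → Bool))) i B) :=
    Set.eval_preimage
  rw [h, Measure.pi_pi]
  rw [show (fun i_1 => μ (Function.update (fun _ : Fin n => (Set.univ : Set (ℕ → Bool))) i B i_1))
      = Function.update (fun _ : Fin n => μ Set.univ) i (μ B) by
    funext k
    by_cases hk : k = i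
    · subst hk; simp
    · simp [Function.update_of_ne hk]]
  rw [Finset.prod_update_of_mem (Finset.mem_univ i)]
  simp [measure_univ]

lemma pi_map_eval {n : ℕ} (μ : Measure (ℕ → Bool)) [IsProbabilityMeasure μ] (i : Fin n) :
    (Measure.pi (fun _ : Fin n => μ)).map (fun S => S i) = μ := by
  refine Measure.ext fun B hB => ?_
  rw [Measure.map_apply (measurable_pi_apply i) hB, pi_eval_apply μ i hB]

lemma iIndep_eval {n : ℕ} (μ : Measure (ℕ → Bool)) [IsProbabilityMeasure μ] :
    iIndepFun
      (fun (i : Fin n) (S : Fin n → (ℕ → Bool)) => S i) (Measure.pi fun _ : Fin n => μ) := by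
  classical
  rw [iIndepFun_iff_measure_inter_preimage_eq_mul]
  intro s sets hsets
  have h : (⋂ i ∈ s, (fun S : Fin n → (ℕ → Bool) => S i) ⁻¹' sets i)
      = Set.pi Set.univ (fun i => if i ∈ s then sets i else Set.univ) := by
    ext x
    simp only [Set.mem_iInter, Set.mem_preimage, Set.mem_pi, Set.mem_univ, true_imp_iff]
    constructor
    · intro hx i
      by_cases hi : i ∈ s <;> simp [hi, hx i]
    · intro hx i hi
      have := hx i; rwa [if_pos hi] at this
  rw [h, Measure.pi_pi]
  have h2 : ∀ i : Fin n, μ (if i ∈ s then sets i else Set.univ)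
      = if i ∈ s then μ (sets i) else 1 := by
    intro i; split <;> simp [measure_univ]
  simp_rw [h2]
  rw [Finset.prod_ite_mem Finset.univ s (fun i => μ (sets i)), Finset.univ_inter]
  refine Finset.prod_congr rfl fun i hi => ?_
  rw [pi_eval_apply μ i (hsets i hi)]
lemma memL2_bern_eval {n : ℕ} (μ : Measure (ℕ → Bool)) [IsProbabilityMeasure μ] (j : ℕ)
    (i : Fin n) :
    MemLp (fun S : Fin n → (ℕ → Bool) => bern j (S i)) 2 (Measure.pi fun _ : Fin n => μ) := by
  have hm : Measurable fun S : Fin n → (ℕ → Bool) => bern j (S i) :=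
    (measurable_bern j).comp (measurable_pi_apply i)
  refine (memLp_top_of_bound hm.aestronglyMeasurable 1 ?_).mono_exponent le_top
  filter_upwards with S
  rw [Real.norm_eq_abs, abs_of_nonneg (bern_nonneg _ _)]
  exact bern_le_one _ _

lemma integral_bern_eval {n : ℕ} (μ : Measure (ℕ → Bool)) [IsProbabilityMeasure μ] (j : ℕ)
    (i : Fin n) :
    ∫ S, bern j (S i) ∂(Measure.pi fun _ : Fin n => μ) = meanVec μ j := by
  have : ∫ S, bern j (S i) ∂(Measure.pi fun _ : Fin n => μ)
      = ∫ x, bern j x ∂((Measure.pi fun _ : Fin n => μ).map (fun S => S i)) := by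
    rw [integral_map (measurable_pi_apply i).aemeasurable
      ((measurable_bern j).aestronglyMeasurable)]
  rw [this, pi_map_eval μ i, integral_bern μ j]

lemma variance_bern_eval {n : ℕ} (μ : Measure (ℕ → Bool)) [IsProbabilityMeasure μ] (j : ℕ)
    (i : Fin n) :
    variance (fun S : Fin n → (ℕ → Bool) => bern j (S i)) (Measure.pi fun _ : Fin n => μ)
      ≤ 1 / 4 := by
  set ν := Measure.pi fun _ : Fin n => μ
  have hmem := memL2_bern_eval μ j i
  rw [variance_eq_sub hmem]
  have h1 : ((fun S : Fin n → (ℕ → Bool) => bern j (S i)) ^ 2)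
      = fun S : Fin n → (ℕ → Bool) => bern j (S i) := by
    funext S; simp [bern_sq]
  rw [h1, integral_bern_eval μ j i]
  have h2 : 0 ≤ 1 / 4 - (meanVec μ j - meanVec μ j ^ 2) := by nlinarith [sq_nonneg (meanVec μ j - 1/2)]
  linarith

/-- Chebyshev's inequality for the empirical mean of coordinate `j`. -/
lemma cheb (μ : Measure (ℕ → Bool)) [IsProbabilityMeasure μ] {n : ℕ} (hn : 0 < n) (j : ℕ)
    {a : ℝ} (ha : 0 < a) :
    (Measure.pi fun _ : Fin n => μ) {S | a ≤ |phat n S j - meanVec μ j|}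
      ≤ ENNReal.ofReal (1 / (4 * n * a ^ 2)) := by
  set ν := Measure.pi fun _ : Fin n => μ with hν
  set X : Fin n → (Fin n → (ℕ → Bool)) → ℝ := fun i S => bern j (S i) with hX
  have hmem : ∀ i : Fin n, MemLp (X i) 2 ν := fun i => memL2_bern_eval μ j i
  have hsum_mem : MemLp (∑ i, X i) 2 ν := memLp_finset_sum' _ fun i _ => hmem i
  have hpair : Set.Pairwise ↑(Finset.univ : Finset (Fin n))
      fun i k => IndepFun (X i) (X k) ν := by
    intro i _ k _ hik
    exact ((iIndep_eval (n := n) μ).comp (fun _ => bern j) (fun _ => measurable_bern j)).indepFun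
      hik
  have hvar : variance (∑ i, X i) ν ≤ n / 4 := by
    rw [IndepFun.variance_sum (fun i _ => hmem i) hpair]
    calc ∑ i : Fin n, variance (X i) ν ≤ ∑ _i : Fin n, (1:ℝ)/4 :=
          Finset.sum_le_sum fun i _ => variance_bern_eval μ j i
      _ = n / 4 := by simp [Finset.sum_const]; ring
  have hEsum : ∫ S, (∑ i, X i) S ∂ν = n * meanVec μ j := by
    have : ∫ S, (∑ i, X i) S ∂ν = ∑ i : Fin n, ∫ S, X i S ∂ν := by
      simp_rw [Finset.sum_apply]
      exact integral_finset_sum _ fun i _ => (hmem i).integrable one_le_two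
    rw [this]
    simp [hX, hν, integral_bern_eval μ j, Finset.sum_const]
  have hc : (0:ℝ) < n * a := by positivity
  have hcheb := meas_ge_le_variance_div_sq (μ := ν) hsum_mem hc
  have hset : {S | a ≤ |phat n S j - meanVec μ j|}
      = {S | n * a ≤ |(∑ i, X i) S - ∫ S, (∑ i, X i) S ∂ν|} := by
    ext S
    simp only [Set.mem_setOf_eq, hEsum]
    have hns : (∑ i, X i) S = ∑ i, bern j (S i) := by simp [hX, Finset.sum_apply]
    have hphat : phat n S j = (∑ i, bern j (S i)) / n := rfl
    have hnpos : (0:ℝ) < n := by exact_mod_cast hn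
    rw [hns, hphat]
    have key : |(∑ i, bern j (S i)) - n * meanVec μ j|
        = n * |(∑ i, bern j (S i)) / n - meanVec μ j| := by
      rw [← abs_of_pos hnpos, ← abs_mul]
      congr 1
      field_simp
      rw [abs_of_pos hnpos]; ring
    rw [key]
    constructor
    · intro h; exact mul_le_mul_of_nonneg_left h hnpos.le
    · intro h; exact le_of_mul_le_mul_left h hnpos
  rw [hset]
  refine hcheb.trans (ENNReal.ofReal_le_ofReal ?_)
  have hnpos : (0:ℝ) < n := by exact_mod_cast hn
  rw [div_le_div_iff₀ (by positivity) (by positivity)]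
  calc variance (∑ i, X i) ν * (4 * n * a ^ 2) ≤ (n / 4) * (4 * n * a ^ 2) := by
        apply mul_le_mul_of_nonneg_right hvar (by positivity)
    _ = 1 * (n * a) ^ 2 := by ring
section Estimator

variable (M : ℕ → ℕ → ℝ)

open Classical in
/-- Choice of a distinguishing coordinate for an ordered pair. -/
noncomputable def Jc0 (a b : ℕ) : ℕ :=
  if h : M a ≠ M b then (Function.ne_iff.mp h).choose else 0

open Classical in
lemma Jc0_spec {a b : ℕ} (h : M a ≠ M b) : M a (Jc0 M a b) ≠ M b (Jc0 M a b) := by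
  rw [Jc0, dif_pos h]
  exact (Function.ne_iff.mp h).choose_spec

/-- A coordinate distinguishing `M k` from `M l` (symmetric in `k, l`). -/
noncomputable def Jc (k l : ℕ) : ℕ := Jc0 M (min k l) (max k l)

lemma Jc_symm (k l : ℕ) : Jc M k l = Jc M l k := by
  rw [Jc, Jc, min_comm, max_comm]

lemma minmax_ne {k l : ℕ} (h : M k ≠ M l) : M (min k l) ≠ M (max k l) := by
  rcases le_total k l with hkl | hkl
  · rwa [min_eq_left hkl, max_eq_right hkl]
  · rw [min_eq_right hkl, max_eq_left hkl]; exact h.symm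

lemma Jc_spec {k l : ℕ} (h : M k ≠ M l) : M k (Jc M k l) ≠ M l (Jc M k l) := by
  have hspec := Jc0_spec M (minmax_ne M h)
  rw [Jc]
  rcases le_total k l with hkl | hkl
  · rwa [min_eq_left hkl, max_eq_right hkl] at hspec ⊢
  · rw [min_eq_right hkl, max_eq_left hkl] at hspec ⊢
    exact hspec.symm

/-- Separation at the distinguishing coordinate. -/
noncomputable def epsd (k l : ℕ) : ℝ := |M k (Jc M k l) - M l (Jc M k l)|

lemma epsd_symm (k l : ℕ) : epsd M k l = epsd M l k := by
  rw [epsd, epsd, Jc_symm, abs_sub_comm]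

lemma epsd_pos {k l : ℕ} (h : M k ≠ M l) : 0 < epsd M k l :=
  abs_pos.mpr (sub_ne_zero.mpr (Jc_spec M h))

/-- The sample-size threshold at which the pair `(k, l)` is compared. -/
noncomputable def Td (k l : ℕ) : ℕ := ⌈(2:ℝ) ^ (k + l) / epsd M k l ^ 2⌉₊

lemma Td_symm (k l : ℕ) : Td M k l = Td M l k := by
  rw [Td, Td, add_comm, epsd_symm]

lemma Td_pos {k l : ℕ} (h : M k ≠ M l) : 0 < Td M k l := by
  rw [Td, Nat.ceil_pos]
  have := epsd_pos M h
  positivity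

/-- Consistency of hypothesis `k` with the sample (at sample size `n`). -/
def Con (n : ℕ) (S : Fin n → (ℕ → Bool)) (k : ℕ) : Prop :=
  ∀ l ≤ n, M k ≠ M l → Td M k l ≤ n →
    |phat n S (Jc M k l) - M k (Jc M k l)| < epsd M k l / 2

lemma measurableSet_con (n k : ℕ) : MeasurableSet {S : Fin n → (ℕ → Bool) | Con M n S k} := by
  have h : {S : Fin n → (ℕ → Bool) | Con M n S k}
      = ⋂ l, ⋂ (_ : l ≤ n), ⋂ (_ : M k ≠ M l), ⋂ (_ : Td M k l ≤ n),
          {S | |phat n S (Jc M k l) - M k (Jc M k l)| < epsd M k l / 2} := by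
    ext S
    simp only [Set.mem_setOf_eq, Set.mem_iInter, Con]
  rw [h]
  refine MeasurableSet.iInter fun l => MeasurableSet.iInter fun _ =>
    MeasurableSet.iInter fun _ => MeasurableSet.iInter fun _ => ?_
  have hmeas : Measurable fun S : Fin n → (ℕ → Bool) =>
      |phat n S (Jc M k l) - M k (Jc M k l)| :=
    ((measurable_phat n (Jc M k l)).sub measurable_const).abs
  exact measurableSet_lt hmeas measurable_const

lemma sel_ex (n : ℕ) (S : Fin n → (ℕ → Bool)) :
    ∃ c, (c ≤ n ∧ Con M n S c) ∨ c = n + 1 := ⟨n + 1, Or.inr rfl⟩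

open Classical in
/-- The selector: the least consistent index (or `n+1` if there is none). -/
noncomputable def sel (n : ℕ) (S : Fin n → (ℕ → Bool)) : ℕ := Nat.find (sel_ex M n S)

open Classical in
lemma sel_spec (n : ℕ) (S : Fin n → (ℕ → Bool)) :
    (sel M n S ≤ n ∧ Con M n S (sel M n S)) ∨ sel M n S = n + 1 :=
  Nat.find_spec (sel_ex M n S)

open Classical in
lemma sel_le {n : ℕ} {S : Fin n → (ℕ → Bool)} {c : ℕ}
    (h : (c ≤ n ∧ Con M n S c) ∨ c = n + 1) : sel M n S ≤ c :=
  Nat.find_min' (sel_ex M n S) h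

open Classical in
lemma measurable_sel (n : ℕ) : Measurable (sel M n) := by
  have := measurable_find (mα := inferInstance) (p := fun (S : Fin n → (ℕ → Bool)) (c : ℕ) =>
      (c ≤ n ∧ Con M n S c) ∨ c = n + 1) (sel_ex M n) ?_
  · exact this
  · intro c
    have h : {S : Fin n → (ℕ → Bool) | (c ≤ n ∧ Con M n S c) ∨ c = n + 1}
        = ({S | c ≤ n} ∩ {S | Con M n S c}) ∪ {S | c = n + 1} := by
      ext S; simp [Set.mem_setOf_eq, Set.mem_inter_iff, Set.mem_union]
    rw [h]
    refine MeasurableSet.union (MeasurableSet.inter ?_ (measurableSet_con M n c)) ?_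
    · by_cases hc : c ≤ n <;> simp [hc]
    · by_cases hc : c = n + 1 <;> simp [hc]

/-- The estimator. -/
noncomputable def Est (n : ℕ) (S : Fin n → (ℕ → Bool)) : ℕ → ℝ :=
  fun j => max 0 (min 1 (M (sel M n S) j))

lemma measurable_Est (n : ℕ) : Measurable (Est M n) := by
  refine measurable_pi_lambda _ fun j => ?_
  exact (measurable_from_nat (f := fun c => max 0 (min 1 (M c j)))).comp (measurable_sel M n)

lemma Est_mem_Icc (n : ℕ) (S : Fin n → (ℕ → Bool)) (j : ℕ) :
    Est M n S j ∈ Set.Icc (0:ℝ) 1 :=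
  ⟨le_max_left _ _, max_le zero_le_one (min_le_left _ _)⟩

/-- Key deterministic fact: if the true index `t` is consistent and `n` is large enough,
the selected index has the same mean vector as `t`. -/
lemma sel_mean_eq {n t : ℕ} {S : Fin n → (ℕ → Bool)} (htn : t ≤ n)
    (hN : ∀ k ≤ t, M k ≠ M t → Td M k t ≤ n) (hcon : Con M n S t) :
    M (sel M n S) = M t := by
  have hsel_le : sel M n S ≤ t := sel_le M (Or.inl ⟨htn, hcon⟩)
  set c := sel M n S with hc
  have hspec := sel_spec M n S
  have hcn : c ≤ n ∧ Con M n S c := by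
    rcases hspec with h | h
    · exact h
    · omega
  by_contra hne
  have hTd : Td M c t ≤ n := hN c hsel_le hne
  have h1 := hcn.2 t htn hne hTd
  have h2 := hcon c (hcn.1) (Ne.symm hne) (by rwa [Td_symm] at hTd)
  rw [Jc_symm, epsd_symm] at h2
  have htri : epsd M c t ≤ |phat n S (Jc M c t) - M c (Jc M c t)|
      + |phat n S (Jc M c t) - M t (Jc M c t)| := by
    rw [epsd]
    calc |M c (Jc M c t) - M t (Jc M c t)|
        ≤ |M c (Jc M c t) - phat n S (Jc M c t)| + |phat n S (Jc M c t) - M t (Jc M c t)| :=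
          abs_sub_le _ _ _
      _ = _ := by rw [abs_sub_comm]
  linarith

end Estimator
lemma main_tendsto (f : ℕ → Measure (ℕ → Bool)) (hf : ∀ k, IsProbabilityMeasure (f k)) (t : ℕ) :
    Tendsto (fun n : ℕ => ∫ S, supDist (Est (fun k => meanVec (f k)) n S) (meanVec (f t))
      ∂(Measure.pi fun _ : Fin n => f t)) atTop (nhds 0) := by
  classical
  haveI := hf t
  set M : ℕ → ℕ → ℝ := fun k => meanVec (f k) with hMdef
  have hM0 : ∀ k j, 0 ≤ M k j := fun k j => ENNReal.toReal_nonneg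
  have hM1 : ∀ k j, M k j ≤ 1 := by
    intro k j
    haveI := hf k
    have h : (f k) {x | x j = true} ≤ 1 := prob_le_one
    calc ((f k) {x | x j = true}).toReal ≤ (1 : ℝ≥0∞).toReal :=
          ENNReal.toReal_mono ENNReal.one_ne_top h
      _ = 1 := by simp
  have hEst : ∀ n S, Est M n S = M (sel M n S) := by
    intro n S; funext j
    rw [Est, min_eq_right (hM1 _ j), max_eq_right (hM0 _ j)]
  set D : ℕ → ℝ := fun c => supDist (M c) (M t) with hDdef
  have hD0 : ∀ c, 0 ≤ D c := fun c => Real.iSup_nonneg fun j => abs_nonneg _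
  have hD1 : ∀ c, D c ≤ 1 := by
    intro c
    refine ciSup_le fun j => abs_le.mpr ⟨?_, ?_⟩
    · have := hM0 c j; have := hM1 t j; linarith
    · have := hM1 c j; have := hM0 t j; linarith
  have hDeq : ∀ c, M c = M t → D c = 0 := by
    intro c h
    simp only [hDdef, supDist, h, sub_self, abs_zero, ciSup_const]
  -- the per-pair error bound
  set G : ℕ → ℕ → ℝ := fun n l =>
    if l ≤ n ∧ M t ≠ M l ∧ Td M t l ≤ n then 1 / (n * epsd M t l ^ 2) else 0 with hGdef
  have hG0 : ∀ n l, 0 ≤ G n l := by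
    intro n l
    simp only [hGdef]
    split
    · positivity
    · exact le_refl 0
  -- the bad event: true hypothesis not consistent
  set Bad : (n : ℕ) → Set (Fin n → (ℕ → Bool)) := fun n => {S | ¬ Con M n S t} with hBdef
  have hBadMeas : ∀ n, MeasurableSet (Bad n) := fun n => (measurableSet_con M n t).compl
  -- Step 1: measure of the bad event
  have step1 : ∀ n, (Measure.pi fun _ : Fin n => f t) (Bad n)
      ≤ ENNReal.ofReal (∑ l ∈ Finset.range (n + 1), G n l) := by
    intro n
    classical
    set E : ℕ → Set (Fin n → (ℕ → Bool)) := fun l =>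
      if M t ≠ M l ∧ Td M t l ≤ n then
        {S | epsd M t l / 2 ≤ |phat n S (Jc M t l) - M t (Jc M t l)|} else ∅ with hEdef
    have hsub : Bad n ⊆ ⋃ l ∈ Finset.range (n + 1), E l := by
      intro S hS
      simp only [hBdef, Set.mem_setOf_eq, Con] at hS
      push_neg at hS
      obtain ⟨l, hln, hne, hTd, habs⟩ := hS
      refine Set.mem_biUnion (Finset.mem_range.mpr (Nat.lt_succ_of_le hln)) ?_
      rw [hEdef]
      simp only [if_pos (And.intro hne hTd)]
      exact habs
    have hE_le : ∀ l ∈ Finset.range (n + 1),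
        (Measure.pi fun _ : Fin n => f t) (E l) ≤ ENNReal.ofReal (G n l) := by
      intro l hl
      simp only [hEdef, hGdef]
      by_cases hc : M t ≠ M l ∧ Td M t l ≤ n
      · rw [if_pos hc, if_pos ⟨Nat.lt_succ_iff.mp (Finset.mem_range.mp hl), hc⟩]
        have hεpos : 0 < epsd M t l := epsd_pos M hc.1
        have hn : 0 < n := lt_of_lt_of_le (Td_pos M hc.1) hc.2
        have hch := cheb (f t) hn (Jc M t l) (a := epsd M t l / 2) (by positivity)
        have heq : (1 : ℝ) / (4 * n * (epsd M t l / 2) ^ 2) = 1 / (n * epsd M t l ^ 2) := by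
          congr 1; ring
        rw [heq] at hch
        exact hch
      · rw [if_neg hc, if_neg (by tauto)]
        simp
    calc (Measure.pi fun _ : Fin n => f t) (Bad n)
        ≤ (Measure.pi fun _ : Fin n => f t) (⋃ l ∈ Finset.range (n + 1), E l) :=
          measure_mono hsub
      _ ≤ ∑ l ∈ Finset.range (n + 1), (Measure.pi fun _ : Fin n => f t) (E l) :=
          measure_biUnion_finset_le _ _
      _ ≤ ∑ l ∈ Finset.range (n + 1), ENNReal.ofReal (G n l) := Finset.sum_le_sum hE_le
      _ = ENNReal.ofReal (∑ l ∈ Finset.range (n + 1), G n l) :=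
          (ENNReal.ofReal_sum_of_nonneg fun l _ => hG0 n l).symm
  -- Step 2: the expected error is bounded by the bad-event probability (for large n)
  set b : ℕ → ℝ := fun n => ∑ l ∈ Finset.range (n + 1), G n l with hbdef
  have hb0 : ∀ n, 0 ≤ b n := fun n => Finset.sum_nonneg fun l _ => hG0 n l
  set N : ℕ := max t ((Finset.range (t + 1)).sup fun k => Td M k t) with hNdef
  have step2 : ∀ n, N ≤ n →
      (∫ S, supDist (Est M n S) (meanVec (f t)) ∂(Measure.pi fun _ : Fin n => f t)) ≤ b n := by
    intro n hNn
    have htn : t ≤ n := le_trans (le_max_left _ _) hNn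
    have hTdn : ∀ k ≤ t, M k ≠ M t → Td M k t ≤ n := by
      intro k hk _
      calc Td M k t ≤ (Finset.range (t + 1)).sup fun k => Td M k t :=
            Finset.le_sup (f := fun k => Td M k t) (Finset.mem_range.mpr (Nat.lt_succ_of_le hk))
        _ ≤ n := le_trans (le_max_right _ _) hNn
    have hint_eq : (∫ S, supDist (Est M n S) (meanVec (f t))
        ∂(Measure.pi fun _ : Fin n => f t))
        = ∫ S, D (sel M n S) ∂(Measure.pi fun _ : Fin n => f t) := by
      refine integral_congr_ae (Filter.Eventually.of_forall fun S => ?_)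
      show supDist (Est M n S) (meanVec (f t)) = D (sel M n S)
      rw [hEst n S]
    rw [hint_eq]
    have hmeas : Measurable fun S : Fin n → (ℕ → Bool) => D (sel M n S) :=
      (measurable_from_nat (f := D)).comp (measurable_sel M n)
    have hint1 : Integrable (fun S => D (sel M n S)) (Measure.pi fun _ : Fin n => f t) := by
      refine (integrable_const (1:ℝ)).mono' hmeas.aestronglyMeasurable ?_
      filter_upwards with S
      rw [Real.norm_eq_abs, abs_of_nonneg (hD0 _)]
      exact hD1 _
    have hint2 : Integrable ((Bad n).indicator fun _ => (1:ℝ))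
        (Measure.pi fun _ : Fin n => f t) := (integrable_const (1:ℝ)).indicator (hBadMeas n)
    have hptwise : ∀ S, D (sel M n S) ≤ (Bad n).indicator (fun _ => (1:ℝ)) S := by
      intro S
      by_cases hS : S ∈ Bad n
      · rw [Set.indicator_of_mem hS]
        exact hD1 _
      · rw [Set.indicator_of_notMem hS]
        have hcon : Con M n S t := not_not.mp hS
        rw [hDeq _ (sel_mean_eq M htn hTdn hcon)]
    calc ∫ S, D (sel M n S) ∂(Measure.pi fun _ : Fin n => f t)
        ≤ ∫ S, (Bad n).indicator (fun _ => (1:ℝ)) S ∂(Measure.pi fun _ : Fin n => f t) :=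
          integral_mono hint1 hint2 hptwise
      _ = ((Measure.pi fun _ : Fin n => f t) (Bad n)).toReal • (1:ℝ) :=
          integral_indicator_const (1:ℝ) (hBadMeas n)
      _ = ((Measure.pi fun _ : Fin n => f t) (Bad n)).toReal := by rw [smul_eq_mul, mul_one]
      _ ≤ b n := ENNReal.toReal_le_of_le_ofReal (hb0 n) (step1 n)
  -- Step 3: b tends to 0
  have step3 : Tendsto b atTop (nhds 0) := by
    have hbt : ∀ n, b n = ∑' l, G n l := by
      intro n
      refine (tsum_eq_sum ?_).symm
      intro l hl
      simp only [hGdef]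
      rw [if_neg]
      intro hcond
      exact hl (Finset.mem_range.mpr (Nat.lt_succ_of_le hcond.1))
    have hlim : ∀ l, Tendsto (fun n => G n l) atTop (nhds 0) := by
      intro l
      by_cases hMl : M t ≠ M l
      · have hεpos : 0 < epsd M t l := epsd_pos M hMl
        have h2 : ∀ n : ℕ, G n l ≤ (1 / epsd M t l ^ 2) * (1 / n) := by
          intro n
          simp only [hGdef]
          split
          · rw [one_div_mul_one_div, mul_comm (epsd M t l ^ 2)]
          · positivity
        have h3 : Tendsto (fun n : ℕ => (1 / epsd M t l ^ 2) * (1 / n)) atTop (nhds 0) := by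
          have := tendsto_one_div_atTop_nhds_zero_nat.const_mul (1 / epsd M t l ^ 2)
          rwa [mul_zero] at this
        exact squeeze_zero (fun n => hG0 n l) h2 h3
      · have hzero : (fun n => G n l) = fun _ => (0:ℝ) := by
          funext n
          simp only [hGdef]
          rw [if_neg (by tauto)]
        rw [hzero]
        exact tendsto_const_nhds
    have hbound : ∀ n l, ‖G n l‖ ≤ (1/2 : ℝ) ^ (t + l) := by
      intro n l
      rw [Real.norm_eq_abs, abs_of_nonneg (hG0 n l)]
      simp only [hGdef]
      split
      case isTrue hcond =>
        obtain ⟨-, hne, hTd⟩ := hcond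
        have hεpos : 0 < epsd M t l := epsd_pos M hne
        have h1 : (2:ℝ) ^ (t + l) / epsd M t l ^ 2 ≤ Td M t l := Nat.le_ceil _
        have h2 : (Td M t l : ℝ) ≤ n := by exact_mod_cast hTd
        have h3 : (2:ℝ) ^ (t + l) ≤ n * epsd M t l ^ 2 := by
          rw [div_le_iff₀ (by positivity)] at h1
          calc (2:ℝ) ^ (t + l) ≤ Td M t l * epsd M t l ^ 2 := h1
            _ ≤ n * epsd M t l ^ 2 := by
                apply mul_le_mul_of_nonneg_right h2 (by positivity)
      -- conclude
        rw [one_div_pow]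
        exact one_div_le_one_div_of_le (by positivity) h3
      case isFalse =>
        positivity
    have hmain := tendsto_tsum_of_dominated_convergence
      (f := G) (g := fun _ => (0:ℝ)) (bound := fun l => (1/2 : ℝ) ^ (t + l)) ?_ hlim
      (Filter.Eventually.of_forall hbound)
    · simp only [tsum_zero] at hmain
      have hb_eq : b = fun n => ∑' l, G n l := funext hbt
      rw [hb_eq]
      exact hmain
    · simp_rw [pow_add]
      exact (summable_geometric_of_lt_one (by norm_num) (by norm_num)).mul_left _
  -- conclude by squeezing
  refine squeeze_zero' ?_ ?_ step3
  · filter_upwards with n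
    exact integral_nonneg fun S => Real.iSup_nonneg fun j => abs_nonneg _
  · filter_upwards [eventually_ge_atTop N] with n hn
    exact step2 n hn

end UMEAux

/-- A collection of distributions on `{0,1}^ι` is UME-learnable if there is a sequence of
measurable estimators `A n : ({0,1}^ι)^n → [0,1]^ι` with
`E_{S ∼ μ^n} ‖A n S − Mean μ‖_∞ → 0` for every `μ` in the collection. -/
def UMELearnable {ι : Type*} (Q : Set (Measure (ι → Bool))) : Prop :=
  ∃ A : (n : ℕ) → (Fin n → (ι → Bool)) → ι → ℝ,
    (∀ n, Measurable (A n)) ∧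
    (∀ n S j, A n S j ∈ Set.Icc (0 : ℝ) 1) ∧
    ∀ μ ∈ Q,
      Tendsto (fun n : ℕ =>
          ∫ S, supDist (A n S) (meanVec μ) ∂(Measure.pi fun _ : Fin n => μ))
        atTop (nhds 0)

/-- Every countable collection of probability measures on `{0,1}^ℕ` is UME-learnable. -/
theorem countable_UMELearnable (Q : Set (Measure (ℕ → Bool)))
    (hQcount : Q.Countable) (hQprob : ∀ μ ∈ Q, IsProbabilityMeasure μ) :
    UMELearnable Q := by
  rcases Q.eq_empty_or_nonempty with hQ | hQ
  · refine ⟨fun n S j => 1/2, fun n => measurable_const, fun n S j => by norm_num, ?_⟩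
    intro μ hμ
    rw [hQ] at hμ
    exact absurd hμ (Set.notMem_empty μ)
  · obtain ⟨f, hf⟩ := Set.Countable.exists_eq_range hQcount hQ
    have hfprob : ∀ k, IsProbabilityMeasure (f k) := by
      intro k
      exact hQprob (f k) (hf ▸ Set.mem_range_self k)
    set M : ℕ → ℕ → ℝ := fun k => meanVec (f k) with hM
    refine ⟨UMEAux.Est M, fun n => UMEAux.measurable_Est M n,
      fun n S j => UMEAux.Est_mem_Icc M n S j, ?_⟩
    intro μ hμ
    rw [hf] at hμ
    obtain ⟨t, ht⟩ := hμ
    rw [← ht]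
    exact UMEAux.main_tendsto f hfprob t
end

section
/- Let ε > 0 and let Q be a collection of probability measures on {0,1}^ℕ that has a countable ε-cover for its means. Then there exists a sequence of measurable estimators A_n : ({0,1}^ℕ)^n → [0,1]^ℕ such that for every μ ∈ Q, with probability 1 over an i.i.d. sample sequence X^(1), X^(2), … ∼ μ, there exists n_0 ∈ ℕ such that for all n > n_0, ‖A_n(X^(1),…,X^(n)) − Mean(μ)‖_∞ ≤ ε. -/
open MeasureTheory Filter

/-- `ν` is the law of an i.i.d. infinite sequence of samples from `μ`, i.e. the countable
product measure `μ^ℕ`: it is a probability measure whose finite-dimensional cylinder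
probabilities factor as products of `μ`-probabilities. -/
def IsIIDSeq {Ω : Type*} [MeasurableSpace Ω] (μ : Measure Ω) (ν : Measure (ℕ → Ω)) : Prop :=
  IsProbabilityMeasure ν ∧
  ∀ (F : Finset ℕ) (A : ℕ → Set Ω), (∀ i, MeasurableSet (A i)) →
    ν {ω | ∀ i ∈ F, ω i ∈ A i} = ∏ i ∈ F, μ (A i)

/-! ### The estimator -/

noncomputable def empCore (m : ℕ) (T : Fin (m^4) → Fin m → Bool) (j : Fin m) : ℝ :=
  (∑ i, if T i j then (1:ℝ) else 0) / (m^4 : ℕ)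

open Classical in
noncomputable def estCore (ε : ℝ) (e : ℕ → ℕ → ℝ) (m : ℕ) (T : Fin (m^4) → Fin m → Bool) :
    ℕ → ℝ :=
  let acc := (Finset.range m).filter fun k => ∀ j : Fin m, |empCore m T j - e k j| < ε
  if h : acc.Nonempty then e (acc.min' h) else e 0

lemma estCore_mem_range (ε : ℝ) (e : ℕ → ℕ → ℝ) (m : ℕ) (T : Fin (m^4) → Fin m → Bool) :
    ∃ k, estCore ε e m T = e k := by
  unfold estCore
  simp only []
  split <;> exact ⟨_, rfl⟩

lemma estCore_spec (ε : ℝ) (e : ℕ → ℕ → ℝ) (m : ℕ) (T : Fin (m^4) → Fin m → Bool)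
    (k0 : ℕ) (hk0 : k0 < m) (hk0acc : ∀ j : Fin m, |empCore m T j - e k0 j| < ε) :
    ∃ k ≤ k0, (∀ j : Fin m, |empCore m T j - e k j| < ε) ∧ estCore ε e m T = e k := by
  classical
  unfold estCore
  simp only []
  have hmem : k0 ∈ (Finset.range m).filter
      (fun k => ∀ j : Fin m, |empCore m T j - e k j| < ε) :=
    Finset.mem_filter.2 ⟨Finset.mem_range.2 hk0, hk0acc⟩
  have hne : ((Finset.range m).filter
      (fun k => ∀ j : Fin m, |empCore m T j - e k j| < ε)).Nonempty := ⟨k0, hmem⟩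
  rw [dif_pos hne]
  refine ⟨_, Finset.min'_le _ _ hmem, ?_, rfl⟩
  exact (Finset.mem_filter.1 (Finset.min'_mem _ hne)).2

lemma msz_pow_le (n : ℕ) : (Nat.sqrt (Nat.sqrt n))^4 ≤ n := by
  calc (Nat.sqrt (Nat.sqrt n))^4 = ((Nat.sqrt (Nat.sqrt n))^2)^2 := by ring
  _ ≤ (Nat.sqrt n)^2 := Nat.pow_le_pow_left (Nat.sqrt_le' _) 2
  _ ≤ n := Nat.sqrt_le' n

noncomputable def estA (ε : ℝ) (e : ℕ → ℕ → ℝ) (n : ℕ) (S : Fin n → (ℕ → Bool)) : ℕ → ℝ :=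
  estCore ε e (Nat.sqrt (Nat.sqrt n))
    (fun i j => S ⟨i, lt_of_lt_of_le i.2 (msz_pow_le n)⟩ j)

lemma estA_meas (ε : ℝ) (e : ℕ → ℕ → ℝ) (n : ℕ) : Measurable (estA ε e n) := by
  have h1 : Measurable (fun (S : Fin n → (ℕ → Bool)) =>
      (fun (i : Fin ((Nat.sqrt (Nat.sqrt n))^4)) (j : Fin (Nat.sqrt (Nat.sqrt n))) =>
        S ⟨i, lt_of_lt_of_le i.2 (msz_pow_le n)⟩ j)) := by
    refine measurable_pi_lambda _ fun i => measurable_pi_lambda _ fun j => ?_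
    exact (measurable_pi_apply _).comp (measurable_pi_apply _)
  exact (Measurable.of_discrete (f := estCore ε e (Nat.sqrt (Nat.sqrt n)))).comp h1

/-! ### Probabilistic lemmas -/

section Prob

variable {μ : Measure (ℕ → Bool)} {ν : Measure (ℕ → ℕ → Bool)}

lemma iid_moment (hμ : IsProbabilityMeasure μ) (hI : IsIIDSeq μ ν) (j N : ℕ) :
    Integrable (fun ω => (∑ i ∈ Finset.range N,
        ((if ω i j = true then (1:ℝ) else 0) - meanVec μ j))^2) ν ∧
    ∫ ω, (∑ i ∈ Finset.range N,
        ((if ω i j = true then (1:ℝ) else 0) - meanVec μ j))^2 ∂ν ≤ N := by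
  haveI := hI.1
  set A : Set (ℕ → Bool) := {x | x j = true} with hA
  have hAm : MeasurableSet A := by
    have h : A = (fun x : ℕ → Bool => x j) ⁻¹' {true} := rfl
    rw [h]; exact (measurable_pi_apply j) (measurableSet_singleton true)
  set B : ℕ → Set (ℕ → ℕ → Bool) := fun i => {ω | ω i j = true} with hB
  have hBm : ∀ i, MeasurableSet (B i) := by
    intro i
    have h : B i = (fun ω : ℕ → ℕ → Bool => ω i j) ⁻¹' {true} := rfl
    rw [h]
    exact ((measurable_pi_apply j).comp (measurable_pi_apply i)) (measurableSet_singleton true)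
  set p : ℝ := (μ A).toReal with hp
  have hmean : meanVec μ j = p := rfl
  have hp0 : 0 ≤ p := ENNReal.toReal_nonneg
  have hp1 : p ≤ 1 := by
    have h1 : μ A ≤ 1 := prob_le_one
    have := ENNReal.toReal_mono (by simp) h1
    simpa using this
  have hνB : ∀ i, ν (B i) = μ A := by
    intro i
    have h := hI.2 {i} (fun _ => A) (fun _ => hAm)
    simp only [Finset.mem_singleton, Finset.prod_singleton] at h
    rw [← h]
    congr 1
    ext ω
    simp [B, A]
  have hνBB : ∀ i i', i ≠ i' → ν (B i ∩ B i') = μ A * μ A := by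
    intro i i' hne
    have h := hI.2 {i, i'} (fun _ => A) (fun _ => hAm)
    rw [Finset.prod_pair hne] at h
    rw [← h]
    congr 1
    ext ω
    simp only [Set.mem_inter_iff, Set.mem_setOf_eq, Finset.mem_insert, Finset.mem_singleton]
    constructor
    · rintro ⟨h1, h2⟩ l (rfl | rfl) <;> assumption
    · intro hl
      exact ⟨hl i (Or.inl rfl), hl i' (Or.inr rfl)⟩
  set X : ℕ → (ℕ → ℕ → Bool) → ℝ := fun i ω => if ω i j = true then 1 else 0 with hX
  have hXind : ∀ i, X i = (B i).indicator (fun _ => (1:ℝ)) := by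
    intro i; funext ω
    by_cases h : ω i j = true <;> simp [X, Set.indicator_apply, B, h]
  have hXXind : ∀ i i', (fun ω => X i ω * X i' ω) = (B i ∩ B i').indicator (fun _ => (1:ℝ)) := by
    intro i i'; funext ω
    by_cases h1 : ω i j = true <;> by_cases h2 : ω i' j = true <;>
      simp [X, Set.indicator_apply, B, h1, h2]
  have hXint : ∀ i, Integrable (X i) ν := by
    intro i; rw [hXind i]; exact (integrable_const (1:ℝ)).indicator (hBm i)
  have hXval : ∀ i, ∫ ω, X i ω ∂ν = p := by
    intro i
    rw [hXind i, integral_indicator_const (1:ℝ) (hBm i), measureReal_def, hνB i]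
    simp [p]
  have hXXint : ∀ i i', Integrable (fun ω => X i ω * X i' ω) ν := by
    intro i i'; rw [hXXind i i']
    exact (integrable_const (1:ℝ)).indicator ((hBm i).inter (hBm i'))
  have hXXval : ∀ i i', ∫ ω, X i ω * X i' ω ∂ν = (ν (B i ∩ B i')).toReal := by
    intro i i'
    rw [hXXind i i', integral_indicator_const (1:ℝ) ((hBm i).inter (hBm i'))]
    simp
    rfl
  have hterm_eq : ∀ i i' : ℕ, (fun ω => (X i ω - p) * (X i' ω - p)) =
      (fun ω => X i ω * X i' ω - p * X i ω - p * X i' ω + p * p) := by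
    intro i i'; funext ω; ring
  have hterm_int : ∀ i i', Integrable (fun ω => (X i ω - p) * (X i' ω - p)) ν := by
    intro i i'
    rw [hterm_eq i i']
    exact (((hXXint i i').sub ((hXint i).const_mul p)).sub
      ((hXint i').const_mul p)).add (integrable_const _)
  have hterm_val : ∀ i i', ∫ ω, (X i ω - p) * (X i' ω - p) ∂ν =
      (ν (B i ∩ B i')).toReal - p * p := by
    intro i i'
    rw [hterm_eq i i']
    have I1 : Integrable (fun ω => X i ω * X i' ω - p * X i ω) ν :=
      (hXXint i i').sub ((hXint i).const_mul p)
    have I2 : Integrable (fun ω => X i ω * X i' ω - p * X i ω - p * X i' ω) ν :=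
      I1.sub ((hXint i').const_mul p)
    rw [integral_add I2 (integrable_const _),
      integral_sub I1 ((hXint i').const_mul p),
      integral_sub (hXXint i i') ((hXint i).const_mul p),
      integral_const_mul, integral_const_mul, hXXval i i', hXval i, hXval i',
      integral_const, measureReal_def]
    simp only [measure_univ, ENNReal.toReal_one, smul_eq_mul, one_mul]
    ring
  have hexp : (fun ω => (∑ i ∈ Finset.range N, (X i ω - p))^2) =
      (fun ω => ∑ i ∈ Finset.range N, ∑ i' ∈ Finset.range N, (X i ω - p) * (X i' ω - p)) := by
    funext ω
    rw [sq, Finset.sum_mul_sum]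
  constructor
  · rw [hmean, hexp]
    exact integrable_finset_sum _ fun i _ =>
      integrable_finset_sum _ fun i' _ => hterm_int i i'
  · rw [hmean, hexp]
    rw [integral_finset_sum _ fun i _ =>
      integrable_finset_sum _ fun i' _ => hterm_int i i']
    have : ∀ i ∈ Finset.range N, ∫ ω, (∑ i' ∈ Finset.range N,
        (X i ω - p) * (X i' ω - p)) ∂ν ≤ 1 := by
      intro i _
      rw [integral_finset_sum _ fun i' _ => hterm_int i i']
      have hle : ∀ i' ∈ Finset.range N, ∫ ω, (X i ω - p) * (X i' ω - p) ∂ν ≤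
          if i' = i then 1 else 0 := by
        intro i' _
        rw [hterm_val i i']
        by_cases h : i' = i
        · subst h
          rw [Set.inter_self, hνB i', if_pos rfl]
          nlinarith [hp0, hp1]
        · rw [hνBB i i' (fun hc => h hc.symm), if_neg h, ENNReal.toReal_mul]
          simp [p]
      calc ∑ i' ∈ Finset.range N, ∫ ω, (X i ω - p) * (X i' ω - p) ∂ν
          ≤ ∑ i' ∈ Finset.range N, if i' = i then (1:ℝ) else 0 := Finset.sum_le_sum hle
        _ ≤ 1 := by
            rw [Finset.sum_ite_eq' (Finset.range N) i (fun _ => (1:ℝ))]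
            split <;> norm_num
    calc ∑ i ∈ Finset.range N, ∫ ω, (∑ i' ∈ Finset.range N,
          (X i ω - p) * (X i' ω - p)) ∂ν
        ≤ ∑ _i ∈ Finset.range N, (1:ℝ) := Finset.sum_le_sum this
      _ = N := by simp

lemma iid_cheb (hμ : IsProbabilityMeasure μ) (hI : IsIIDSeq μ ν) (j N : ℕ) (t : ℝ)
    (ht : 0 < t) (hN : 1 ≤ N) :
    ν {ω | t ≤ |(∑ i ∈ Finset.range N, (if ω i j = true then (1:ℝ) else 0)) / (N:ℝ)
        - meanVec μ j|} ≤ ENNReal.ofReal ((N:ℝ) / ((N:ℝ) * t)^2) := by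
  haveI := hI.1
  obtain ⟨hint, hval⟩ := iid_moment hμ hI j N
  set p : ℝ := meanVec μ j with hp
  set f : (ℕ → ℕ → Bool) → ℝ := fun ω => (∑ i ∈ Finset.range N,
    ((if ω i j = true then (1:ℝ) else 0) - p))^2 with hf
  have hNpos : (0:ℝ) < N := by exact_mod_cast hN
  have hsub : {ω | t ≤ |(∑ i ∈ Finset.range N, (if ω i j = true then (1:ℝ) else 0)) / (N:ℝ)
      - p|} ⊆ {ω | ((N:ℝ) * t)^2 ≤ f ω} := by
    intro ω hω
    simp only [Set.mem_setOf_eq] at hω ⊢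
    set S : ℝ := ∑ i ∈ Finset.range N, (if ω i j = true then (1:ℝ) else 0) with hS
    have hsum : ∑ i ∈ Finset.range N, ((if ω i j = true then (1:ℝ) else 0) - p)
        = S - N * p := by
      rw [Finset.sum_sub_distrib, Finset.sum_const, Finset.card_range]
      simp [hS, mul_comm]
    have h1 : (N:ℝ) * t ≤ |S - N * p| := by
      have : S - N * p = (N:ℝ) * (S / N - p) := by field_simp
      rw [this, abs_mul, abs_of_pos hNpos]
      exact mul_le_mul_of_nonneg_left hω (le_of_lt hNpos)
    have h2 : ((N:ℝ) * t)^2 ≤ |S - N * p|^2 :=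
      pow_le_pow_left₀ (by positivity) h1 2
    rw [sq_abs] at h2
    calc ((N:ℝ) * t)^2 ≤ (S - N * p)^2 := h2
      _ = f ω := by rw [hf]; simp only [hsum]
  have markov := mul_meas_ge_le_integral_of_nonneg
    (ae_of_all _ fun ω => sq_nonneg _) hint (((N:ℝ) * t)^2)
  have hc : (0:ℝ) < ((N:ℝ) * t)^2 := by positivity
  have h2 : (ν {ω | ((N:ℝ) * t)^2 ≤ f ω}).toReal ≤ (N:ℝ) / ((N:ℝ) * t)^2 := by
    rw [le_div_iff₀ hc]
    calc (ν {ω | ((N:ℝ) * t)^2 ≤ f ω}).toReal * ((N:ℝ) * t)^2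
        = ((N:ℝ) * t)^2 * (ν {ω | ((N:ℝ) * t)^2 ≤ f ω}).toReal := by ring
      _ ≤ ∫ ω, f ω ∂ν := markov
      _ ≤ N := hval
  calc ν {ω | t ≤ |(∑ i ∈ Finset.range N, (if ω i j = true then (1:ℝ) else 0)) / (N:ℝ) - p|}
      ≤ ν {ω | ((N:ℝ) * t)^2 ≤ f ω} := measure_mono hsub
    _ = ENNReal.ofReal ((ν {ω | ((N:ℝ) * t)^2 ≤ f ω}).toReal) :=
        (ENNReal.ofReal_toReal (measure_ne_top _ _)).symm
    _ ≤ ENNReal.ofReal ((N:ℝ) / ((N:ℝ) * t)^2) := ENNReal.ofReal_le_ofReal h2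

lemma iid_bc (hμ : IsProbabilityMeasure μ) (hI : IsIIDSeq μ ν) (t : ℝ) (ht : 0 < t) :
    ∀ᵐ ω ∂ν, ∀ᶠ m in atTop, ∀ j < m,
      |(∑ i ∈ Finset.range (m^4), (if ω i j = true then (1:ℝ) else 0)) / ((m^4 : ℕ):ℝ)
        - meanVec μ j| < t := by
  haveI := hI.1
  set s : ℕ → Set (ℕ → ℕ → Bool) := fun m => {ω | ∃ j < m,
    t ≤ |(∑ i ∈ Finset.range (m^4), (if ω i j = true then (1:ℝ) else 0)) / ((m^4 : ℕ):ℝ)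
      - meanVec μ j|} with hs
  have hbound : ∀ m, ν (s m) ≤
      ENNReal.ofReal ((m:ℝ) * (((m^4 : ℕ):ℝ) / (((m^4 : ℕ):ℝ) * t)^2)) := by
    intro m
    rcases Nat.eq_zero_or_pos m with rfl | hm
    · have : s 0 = ∅ := by
        ext ω; simp [hs]
      simp [this]
    · have hsub : s m ⊆ ⋃ j ∈ Finset.range m, {ω | t ≤
          |(∑ i ∈ Finset.range (m^4), (if ω i j = true then (1:ℝ) else 0)) / ((m^4 : ℕ):ℝ)
            - meanVec μ j|} := by
        intro ω hω
        obtain ⟨j, hj, hjt⟩ := hω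
        exact Set.mem_biUnion (Finset.mem_range.2 hj) hjt
      have hN : 1 ≤ m^4 := Nat.one_le_iff_ne_zero.2 (by positivity)
      calc ν (s m) ≤ ∑ j ∈ Finset.range m, ν {ω | t ≤
            |(∑ i ∈ Finset.range (m^4), (if ω i j = true then (1:ℝ) else 0)) / ((m^4 : ℕ):ℝ)
              - meanVec μ j|} :=
          le_trans (measure_mono hsub) (measure_biUnion_finset_le _ _)
        _ ≤ ∑ _j ∈ Finset.range m,
            ENNReal.ofReal (((m^4 : ℕ):ℝ) / (((m^4 : ℕ):ℝ) * t)^2) :=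
          Finset.sum_le_sum fun j _ => iid_cheb hμ hI j (m^4) t ht hN
        _ = (m : ENNReal) * ENNReal.ofReal (((m^4 : ℕ):ℝ) / (((m^4 : ℕ):ℝ) * t)^2) := by
          rw [Finset.sum_const, Finset.card_range, nsmul_eq_mul]
        _ = ENNReal.ofReal ((m:ℝ) * (((m^4 : ℕ):ℝ) / (((m^4 : ℕ):ℝ) * t)^2)) := by
          rw [ENNReal.ofReal_mul (by positivity)]
          congr 1
          simp [ENNReal.ofReal_natCast]
  have hg_nonneg : ∀ m : ℕ, 0 ≤ (m:ℝ) * (((m^4 : ℕ):ℝ) / (((m^4 : ℕ):ℝ) * t)^2) := by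
    intro m; positivity
  have hgsum : Summable (fun m : ℕ => (m:ℝ) * (((m^4 : ℕ):ℝ) / (((m^4 : ℕ):ℝ) * t)^2)) := by
    have h := (Real.summable_one_div_nat_pow.mpr (by norm_num : 1 < 3)).mul_left (1 / t^2)
    refine h.congr fun m => ?_
    rcases Nat.eq_zero_or_pos m with rfl | hm
    · simp
    · have hm0 : (m:ℝ) ≠ 0 := Nat.cast_ne_zero.2 (Nat.pos_iff_ne_zero.1 hm)
      push_cast
      field_simp
  have htsum : (∑' m, ν (s m)) ≠ ⊤ := by
    refine ne_top_of_le_ne_top ?_ (ENNReal.tsum_le_tsum hbound)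
    rw [← ENNReal.ofReal_tsum_of_nonneg hg_nonneg hgsum]
    exact ENNReal.ofReal_ne_top
  filter_upwards [ae_eventually_notMem htsum] with ω hω
  refine hω.mono fun m hm => ?_
  intro j hj
  by_contra hc
  push_neg at hc
  exact hm ⟨j, hj, hc⟩

end Prob

/-! ### Deterministic lemmas -/

lemma supDist_le {p q : ℕ → ℝ} {c : ℝ} (h : ∀ j, |p j - q j| ≤ c) : supDist p q ≤ c :=
  ciSup_le h

lemma le_supDist {p q : ℕ → ℝ} (hb : BddAbove (Set.range fun j => |p j - q j|)) (j : ℕ) :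
    |p j - q j| ≤ supDist p q :=
  le_ciSup hb j

lemma detLemma (ε t : ℝ) (ht : 0 < t) (e : ℕ → ℕ → ℝ) (pb : ℕ → ℝ) (ks M : ℕ)
    (hks : ∀ j, |pb j - e ks j| + t < ε)
    (hMks : ks < M)
    (hrej : ∀ k < ks, ε < supDist (e k) pb → ∃ j < M, ε + t ≤ |pb j - e k j|)
    (m : ℕ) (hm : M ≤ m) (T : Fin (m^4) → Fin m → Bool)
    (hdev : ∀ j : Fin m, |empCore m T j - pb (j:ℕ)| < t) :
    supDist (estCore ε e m T) pb ≤ ε := by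
  have hksm : ks < m := lt_of_lt_of_le hMks hm
  have hksacc : ∀ j : Fin m, |empCore m T j - e ks j| < ε := by
    intro j
    calc |empCore m T j - e ks (j:ℕ)|
        ≤ |empCore m T j - pb (j:ℕ)| + |pb (j:ℕ) - e ks (j:ℕ)| := abs_sub_le _ _ _
      _ < ε := by linarith [hdev j, hks (j:ℕ)]
  obtain ⟨k, hkks, hkacc, hkeq⟩ := estCore_spec ε e m T ks hksm hksacc
  rw [hkeq]
  by_contra hgt
  push_neg at hgt
  rcases eq_or_lt_of_le hkks with rfl | hklt
  · have : supDist (e k) pb ≤ ε := by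
      refine supDist_le fun j => ?_
      rw [abs_sub_comm]
      linarith [hks j, ht.le]
    exact absurd hgt (not_lt.2 this)
  · obtain ⟨j, hjM, hjw⟩ := hrej k hklt hgt
    have hjm : j < m := lt_of_lt_of_le hjM hm
    have h1 := hkacc ⟨j, hjm⟩
    have h2 := hdev ⟨j, hjm⟩
    have h3 : |pb j - e k j| ≤ |pb j - empCore m T ⟨j, hjm⟩| + |empCore m T ⟨j, hjm⟩ - e k j| :=
      abs_sub_le _ _ _
    have h2' : |pb j - empCore m T ⟨j, hjm⟩| < t := by rwa [abs_sub_comm] at h2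
    simp only [Fin.val_mk] at h1 h2' h3
    linarith

/-- If `Q` has a countable `ε`-cover for its means, then there are measurable estimators
`A n : ({0,1}^ℕ)^n → [0,1]^ℕ` such that for every `μ ∈ Q`, almost surely over an i.i.d.
sample sequence from `μ`, eventually (for all `n` beyond some `n₀`) the estimate from the
first `n` samples is within `ε` of `Mean μ` in sup-distance. -/
theorem countable_cover_eventually_eps_close
    (ε : ℝ) (hε : 0 < ε) (Q : Set (Measure (ℕ → Bool)))
    (hQprob : ∀ μ ∈ Q, IsProbabilityMeasure μ)
    (D : Set (ℕ → ℝ)) (hDcount : D.Countable)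
    (hD01 : ∀ p ∈ D, ∀ j, p j ∈ Set.Icc (0 : ℝ) 1)
    (hcover : ∀ μ ∈ Q, ∃ p ∈ D, supDist (meanVec μ) p < ε) :
    ∃ A : (n : ℕ) → (Fin n → (ℕ → Bool)) → ℕ → ℝ,
      (∀ n, Measurable (A n)) ∧
      (∀ n S j, A n S j ∈ Set.Icc (0 : ℝ) 1) ∧
      ∀ μ ∈ Q, ∀ ν : Measure (ℕ → (ℕ → Bool)), IsIIDSeq μ ν →
        ∀ᵐ ω ∂ν, ∃ n₀ : ℕ, ∀ n > n₀,
          supDist (A n (fun i : Fin n => ω i)) (meanVec μ) ≤ ε := by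
  classical
  by_cases hD : D.Nonempty
  swap
  · refine ⟨fun _ _ _ => 0, fun n => measurable_const, fun n S j => by norm_num, ?_⟩
    intro μ hμQ ν hI
    obtain ⟨p, hpD, -⟩ := hcover μ hμQ
    exact absurd ⟨p, hpD⟩ hD
  obtain ⟨e, hrange⟩ := Set.Countable.exists_eq_range hDcount hD
  have heD : ∀ k, e k ∈ D := fun k => hrange ▸ Set.mem_range_self k
  refine ⟨estA ε e, estA_meas ε e, ?_, ?_⟩
  · intro n S j
    obtain ⟨k, hk⟩ := estCore_mem_range ε e (Nat.sqrt (Nat.sqrt n))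
      (fun i j => S ⟨i, lt_of_lt_of_le i.2 (msz_pow_le n)⟩ j)
    show estCore ε e _ _ j ∈ Set.Icc (0:ℝ) 1
    rw [hk]
    exact hD01 _ (heD k) j
  intro μ hμQ ν hI
  have hμprob := hQprob μ hμQ
  haveI := hμprob
  haveI := hI.1
  set pb : ℕ → ℝ := meanVec μ with hpb
  have hpb0 : ∀ j, 0 ≤ pb j := fun j => ENNReal.toReal_nonneg
  have hpb1 : ∀ j, pb j ≤ 1 := by
    intro j
    have h1 : μ {x | x j = true} ≤ 1 := prob_le_one
    have := ENNReal.toReal_mono (by simp) h1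
    simpa [hpb, meanVec] using this
  have he0 : ∀ k j, 0 ≤ e k j := fun k j => (hD01 _ (heD k) j).1
  have he1 : ∀ k j, e k j ≤ 1 := fun k j => (hD01 _ (heD k) j).2
  have habs_bdd : ∀ (q r : ℕ → ℝ), (∀ j, 0 ≤ q j) → (∀ j, q j ≤ 1) → (∀ j, 0 ≤ r j) →
      (∀ j, r j ≤ 1) → BddAbove (Set.range fun j => |q j - r j|) := by
    intro q r h1 h2 h3 h4
    refine ⟨1, ?_⟩
    rintro x ⟨j, rfl⟩
    rw [abs_sub_le_iff]
    constructor <;> linarith [h1 j, h2 j, h3 j, h4 j]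
  obtain ⟨p, hpD, hpε⟩ := hcover μ hμQ
  rw [hrange] at hpD
  obtain ⟨ks, rfl⟩ := hpD
  have hsup : supDist pb (e ks) < ε := hpε
  -- bad indices and witnesses
  set bad : Finset ℕ := (Finset.range ks).filter (fun k => ε < supDist (e k) pb) with hbad
  have hwit : ∀ k : ℕ, ∃ j : ℕ, ε < supDist (e k) pb → ε < |pb j - e k j| := by
    intro k
    by_cases h : ε < supDist (e k) pb
    · have hne : ¬ ∀ j, |e k j - pb j| ≤ ε := by
        intro hall
        exact absurd (supDist_le hall) (not_le.2 h)
      push_neg at hne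
      obtain ⟨j, hj⟩ := hne
      exact ⟨j, fun _ => by rwa [abs_sub_comm]⟩
    · exact ⟨0, fun h' => absurd h' h⟩
  choose w hw using hwit
  -- the margin t
  set margins : Finset ℝ := insert 1 (bad.image fun k => (|pb (w k) - e k (w k)| - ε) / 2)
    with hmargins
  have hmne : margins.Nonempty := ⟨1, Finset.mem_insert_self _ _⟩
  set t : ℝ := min ((ε - supDist pb (e ks)) / 2) (margins.min' hmne) with htdef
  have ht : 0 < t := by
    rw [htdef]
    refine lt_min (by linarith) ?_
    rw [Finset.lt_min'_iff]
    intro x hx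
    rw [hmargins] at hx
    rcases Finset.mem_insert.1 hx with rfl | hx
    · norm_num
    · obtain ⟨k, hk, rfl⟩ := Finset.mem_image.1 hx
      have hkgt : ε < supDist (e k) pb := (Finset.mem_filter.1 hk).2
      have := hw k hkgt
      linarith
  have hksmargin : ∀ j, |pb j - e ks j| + t < ε := by
    intro j
    have h1 : |pb j - e ks j| ≤ supDist pb (e ks) :=
      le_supDist (habs_bdd pb (e ks) hpb0 hpb1 (he0 ks) (he1 ks)) j
    have h2 : t ≤ (ε - supDist pb (e ks)) / 2 := min_le_left _ _
    linarith
  set M : ℕ := max (ks + 1) ((bad.sup w) + 1) with hM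
  have hMks : ks < M := lt_of_lt_of_le (Nat.lt_succ_self ks) (le_max_left _ _)
  have hrej : ∀ k < ks, ε < supDist (e k) pb → ∃ j < M, ε + t ≤ |pb j - e k j| := by
    intro k hk hgt
    have hkbad : k ∈ bad := Finset.mem_filter.2 ⟨Finset.mem_range.2 hk, hgt⟩
    refine ⟨w k, ?_, ?_⟩
    · exact lt_of_lt_of_le (Nat.lt_succ_of_le (Finset.le_sup hkbad)) (le_max_right _ _)
    · have h1 : ε < |pb (w k) - e k (w k)| := hw k hgt
      have h2 : t ≤ (|pb (w k) - e k (w k)| - ε) / 2 := by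
        refine le_trans (min_le_right _ _) (Finset.min'_le _ _ ?_)
        rw [hmargins]
        exact Finset.mem_insert_of_mem (Finset.mem_image_of_mem _ hkbad)
      linarith
  -- probabilistic part
  filter_upwards [iid_bc hμprob hI t ht] with ω hω
  have hsqrt_tendsto : Tendsto Nat.sqrt atTop atTop :=
    tendsto_atTop_atTop.2 fun b => ⟨b * b, fun n hn => Nat.le_sqrt.2 hn⟩
  have hm_tendsto : Tendsto (fun n => Nat.sqrt (Nat.sqrt n)) atTop atTop :=
    hsqrt_tendsto.comp hsqrt_tendsto
  have hev := hm_tendsto.eventually (hω.and (eventually_ge_atTop M))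
  obtain ⟨n₀, hn₀⟩ := eventually_atTop.1 hev
  refine ⟨n₀, fun n hn => ?_⟩
  obtain ⟨hgood, hMm⟩ := hn₀ n hn.le
  set m : ℕ := Nat.sqrt (Nat.sqrt n) with hmdef
  have hdev : ∀ j : Fin m, |empCore m
      (fun i j => ω (i:ℕ) (j:ℕ)) j - pb (j:ℕ)| < t := by
    intro j
    have hemp : empCore m (fun i j => ω (i:ℕ) (j:ℕ)) j =
        (∑ i ∈ Finset.range (m^4), (if ω i (j:ℕ) = true then (1:ℝ) else 0)) / ((m^4 : ℕ):ℝ) := by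
      unfold empCore
      congr 1
      exact Fin.sum_univ_eq_sum_range (fun i => if ω i (j:ℕ) = true then (1:ℝ) else 0) (m^4)
    rw [hemp]
    exact hgood (j:ℕ) j.2
  exact detLemma ε t ht e pb ks M hksmargin hMks hrej m hMm
    (fun i j => ω (i:ℕ) (j:ℕ)) hdev
end

section
/- If a collection Q of probability measures on {0,1}^ℕ is separable in its means, then Q is UME-learnable. -/
open MeasureTheory Filter

/-- A set `M ⊆ [0,1]^ι` of mean vectors has a countable `ε`-cover: a countable
`D ⊆ [0,1]^ι` such that every `q ∈ M` is within sup-distance `< ε` of some `p ∈ D`. -/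
def HasCountableCover {ι : Type*} (M : Set (ι → ℝ)) (ε : ℝ) : Prop :=
  ∃ D : Set (ι → ℝ), D.Countable ∧ (∀ p ∈ D, ∀ j, p j ∈ Set.Icc (0 : ℝ) 1) ∧
    ∀ q ∈ M, ∃ p ∈ D, supDist q p < ε

/-- A collection of distributions is separable in its means if its set of mean vectors
has a countable `ε`-cover for every `ε > 0`. -/
def SeparableInMeans {ι : Type*} (Q : Set (Measure (ι → Bool))) : Prop :=
  ∀ ε : ℝ, 0 < ε → HasCountableCover (meanVec '' Q) ε

namespace UMEProof
open Set ProbabilityTheory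
open scoped ENNReal NNReal

noncomputable def mN (n : ℕ) : ℕ := Nat.sqrt (Nat.sqrt (Nat.sqrt n))

noncomputable def dN (n : ℕ) : ℝ := 1 / (mN n + 1)

lemma dN_pos (n : ℕ) : 0 < dN n := by unfold dN; positivity

lemma supDist_le {p q : ℕ → ℝ} {c : ℝ} (h : ∀ j, |p j - q j| ≤ c) : supDist p q ≤ c :=
  ciSup_le h

lemma abs_le_supDist {p q : ℕ → ℝ} {c : ℝ} (hb : ∀ j, |p j - q j| ≤ c) (j : ℕ) :
    |p j - q j| ≤ supDist p q :=
  le_ciSup ⟨c, by rintro x ⟨j, rfl⟩; exact hb j⟩ j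

lemma supDist_comm (p q : ℕ → ℝ) : supDist p q = supDist q p := by
  unfold supDist; simp_rw [abs_sub_comm]

lemma supDist_nonneg (p q : ℕ → ℝ) : 0 ≤ supDist p q :=
  Real.iSup_nonneg fun j => abs_nonneg _

open Classical in
noncomputable def JF (p : ℕ → ℕ → ℝ) (δ : ℝ) (i i' : ℕ) : ℕ :=
  if h : ∃ j, supDist (p i) (p i') - δ < |p i j - p i' j| then h.choose else 0

lemma JF_spec (p : ℕ → ℕ → ℝ) {δ : ℝ} (hδ : 0 < δ) (i i' : ℕ) :
    supDist (p i) (p i') - δ < |p i (JF p δ i i') - p i' (JF p δ i i')| := by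
  have h : ∃ j, supDist (p i) (p i') - δ < |p i j - p i' j| := by
    by_contra hc
    push_neg at hc
    have h1 : supDist (p i) (p i') ≤ supDist (p i) (p i') - δ := ciSup_le hc
    linarith
  rw [JF, dif_pos h]
  exact h.choose_spec

noncomputable def empF (n : ℕ) (S : Fin n → ℕ → Bool) (j : ℕ) : ℝ :=
  (∑ k : Fin n, if S k j then (1:ℝ) else 0) / n

noncomputable def rF (p : ℕ → ℕ → ℝ) (n : ℕ) (S : Fin n → ℕ → Bool) (i : ℕ) : NNReal :=
  (Finset.range (mN n)).sup fun i' => ‖empF n S (JF p (dN n) i i') - p i (JF p (dN n) i i')‖₊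

lemma selF_exists (p : ℕ → ℕ → ℝ) (n : ℕ) (S : Fin n → ℕ → Bool) :
    ∃ i, (i < mN n ∧ ∀ i' < mN n, rF p n S i ≤ rF p n S i') ∨ i = mN n :=
  ⟨mN n, Or.inr rfl⟩

open Classical in
noncomputable def selF (p : ℕ → ℕ → ℝ) (n : ℕ) (S : Fin n → ℕ → Bool) : ℕ :=
  Nat.find (selF_exists p n S)

noncomputable def AF (p : ℕ → ℕ → ℝ) (n : ℕ) (S : Fin n → ℕ → Bool) : ℕ → ℝ :=
  p (selF p n S)

lemma sel_good (p : ℕ → ℕ → ℝ) {n : ℕ} (hm : 0 < mN n) (S : Fin n → ℕ → Bool) :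
    selF p n S < mN n ∧ ∀ i' < mN n, rF p n S (selF p n S) ≤ rF p n S i' := by
  classical
  obtain ⟨b, hb, hbmin⟩ := Finset.exists_min_image (Finset.range (mN n)) (rF p n S)
    ⟨0, Finset.mem_range.mpr hm⟩
  rw [Finset.mem_range] at hb
  have hbP : (b < mN n ∧ ∀ i' < mN n, rF p n S b ≤ rF p n S i') ∨ b = mN n :=
    Or.inl ⟨hb, fun i' hi' => hbmin i' (Finset.mem_range.mpr hi')⟩
  have hle : selF p n S ≤ b := Nat.find_min' (selF_exists p n S) hbP
  have hlt : selF p n S < mN n := lt_of_le_of_lt hle hb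
  have hspec : (selF p n S < mN n ∧ ∀ i' < mN n, rF p n S (selF p n S) ≤ rF p n S i')
      ∨ selF p n S = mN n := Nat.find_spec (selF_exists p n S)
  rcases hspec with h | h
  · exact ⟨hlt, h.2⟩
  · exact absurd h hlt.ne

lemma sel_close (p : ℕ → ℕ → ℝ) (hp : ∀ i j, p i j ∈ Set.Icc (0:ℝ) 1)
    (q : ℕ → ℝ) (hq : ∀ j, q j ∈ Set.Icc (0:ℝ) 1)
    {n : ℕ} (S : Fin n → ℕ → Bool) {i₀ : ℕ} (hi₀ : i₀ < mN n)
    (hE : ∀ i < mN n, ∀ i' < mN n,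
      |empF n S (JF p (dN n) i i') - q (JF p (dN n) i i')| < dN n) :
    supDist (AF p n S) q ≤ 3 * supDist q (p i₀) + 3 * dN n := by
  set m := mN n with hm
  set δ := dN n with hδdef
  have hδ : 0 < δ := dN_pos n
  set ε := supDist q (p i₀) with hε
  have hε0 : 0 ≤ ε := supDist_nonneg _ _
  -- bound on |q j - p i j| families
  have habs : ∀ i j, |q j - p i j| ≤ 1 := by
    intro i j
    have h1 := hp i j; have h2 := hq j
    rw [abs_le]
    exact ⟨by linarith [h1.2, h2.1], by linarith [h1.1, h2.2]⟩
  obtain ⟨hsel_lt, hsel_min⟩ := sel_good p (by omega) S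
  set ihat := selF p n S with hihat
  -- Step 1 : r i₀ ≤ (ε + δ).toNNReal
  have hri₀ : rF p n S i₀ ≤ (ε + δ).toNNReal := by
    apply Finset.sup_le
    intro i' hi'
    rw [Finset.mem_range] at hi'
    set j := JF p δ i₀ i' with hj
    have h1 : |empF n S j - q j| < δ := hE i₀ hi₀ i' hi'
    have h2 : |q j - p i₀ j| ≤ ε := abs_le_supDist (habs i₀) j
    have h3 : |empF n S j - p i₀ j| ≤ ε + δ := by
      have := abs_sub_abs_le_abs_sub (empF n S j) (p i₀ j)
      calc |empF n S j - p i₀ j| ≤ |empF n S j - q j| + |q j - p i₀ j| := abs_sub_le _ _ _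
        _ ≤ ε + δ := by linarith
    rw [← NNReal.coe_le_coe]
    rw [coe_nnnorm, Real.norm_eq_abs, Real.coe_toNNReal _ (by linarith)]
    exact h3
  -- Step 2 : r ihat ≤ r i₀
  have hrihat : rF p n S ihat ≤ (ε + δ).toNNReal := le_trans (hsel_min i₀ hi₀) hri₀
  -- Step 3 : at the test coordinate between ihat and i₀
  set j := JF p δ ihat i₀ with hjdef
  have hj1 : |empF n S j - p ihat j| ≤ ε + δ := by
    have hle : ‖empF n S j - p ihat j‖₊ ≤ rF p n S ihat :=
      Finset.le_sup (f := fun i' => ‖empF n S (JF p δ ihat i') - p ihat (JF p δ ihat i')‖₊)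
        (Finset.mem_range.mpr hi₀)
    have := le_trans hle hrihat
    rw [← NNReal.coe_le_coe, coe_nnnorm, Real.norm_eq_abs,
      Real.coe_toNNReal _ (by linarith)] at this
    exact this
  have hj2 : |empF n S j - q j| < δ := hE ihat hsel_lt i₀ hi₀
  have hj3 : |q j - p ihat j| ≤ ε + 2*δ := by
    calc |q j - p ihat j| ≤ |q j - empF n S j| + |empF n S j - p ihat j| := abs_sub_le _ _ _
      _ ≤ ε + 2*δ := by rw [abs_sub_comm]; linarith
  -- Step 4 : supDist (p ihat) (p i₀) small
  have hq2 : |q j - p i₀ j| ≤ ε := abs_le_supDist (habs i₀) j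
  have hJs := JF_spec p hδ ihat i₀
  rw [← hjdef] at hJs
  have hdist : supDist (p ihat) (p i₀) ≤ 2*ε + 3*δ := by
    have : |p ihat j - p i₀ j| ≤ |p ihat j - q j| + |q j - p i₀ j| := abs_sub_le _ _ _
    rw [abs_sub_comm (p ihat j) (q j)] at this
    linarith
  -- Step 5 : conclude
  have : supDist (AF p n S) q ≤ 3*ε + 3*δ := by
    apply supDist_le
    intro j'
    have h1 : |p ihat j' - p i₀ j'| ≤ supDist (p ihat) (p i₀) := by
      apply abs_le_supDist (c := 1) _ j'
      intro j''
      have a1 := hp ihat j''; have a2 := hp i₀ j''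
      rw [abs_le]
      exact ⟨by linarith [a1.1, a1.2, a2.1, a2.2], by linarith [a1.1, a1.2, a2.1, a2.2]⟩
    have h2 : |p i₀ j' - q j'| ≤ ε := by
      rw [abs_sub_comm]; exact abs_le_supDist (habs i₀) j'
    have : |AF p n S j' - q j'| = |p ihat j' - q j'| := rfl
    rw [this]
    calc |p ihat j' - q j'| ≤ |p ihat j' - p i₀ j'| + |p i₀ j' - q j'| := abs_sub_le _ _ _
      _ ≤ 3*ε + 3*δ := by linarith
  linarith

lemma mN_mono : Monotone mN := fun _ _ h =>
  Nat.sqrt_le_sqrt (Nat.sqrt_le_sqrt (Nat.sqrt_le_sqrt h))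

lemma mN_tendsto : Tendsto mN atTop atTop := by
  apply tendsto_atTop_atTop_of_monotone mN_mono
  intro b
  refine ⟨((b^2)^2)^2, ?_⟩
  simp [mN, Nat.sqrt_eq']

lemma dN_tendsto : Tendsto dN atTop (nhds 0) := by
  have : Tendsto (fun k : ℕ => 1 / ((k:ℝ) + 1)) atTop (nhds 0) :=
    tendsto_one_div_add_atTop_nhds_zero_nat
  exact this.comp mN_tendsto

lemma err_le {n : ℕ} (hn : 1 ≤ n) :
    ((mN n)^2 : ℝ) * (1 / (n * (dN n)^2)) ≤ 16 / Real.sqrt n := by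
  have hm1 : 1 ≤ mN n := by
    have := mN_mono hn
    simpa [mN] using this
  have hsq : ((mN n)^2 : ℕ) ≤ Nat.sqrt (Nat.sqrt n) := Nat.sqrt_le' _
  have hsq2 : (Nat.sqrt (Nat.sqrt n))^2 ≤ Nat.sqrt n := Nat.sqrt_le' _
  have hsqrtn : (Nat.sqrt n : ℝ) ≤ Real.sqrt n := by
    rw [show ((Nat.sqrt n : ℝ)) = Real.sqrt ((Nat.sqrt n)^2) by
      rw [Real.sqrt_sq (by positivity)]]
    apply Real.sqrt_le_sqrt
    exact_mod_cast Nat.sqrt_le' n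
  have hpos : (0:ℝ) < mN n + 1 := by positivity
  have h1 : ((mN n)^2 : ℝ) * (1 / (n * (dN n)^2))
      = (mN n)^2 * ((mN n:ℝ)+1)^2 / n := by
    rw [show dN n = 1 / (mN n + 1) from rfl]
    field_simp
  rw [h1]
  have h2 : ((mN n:ℝ)+1)^2 ≤ 4 * (mN n)^2 := by
    have : (1:ℝ) ≤ mN n := by exact_mod_cast hm1
    nlinarith
  have h3 : ((mN n:ℝ)^2)^2 ≤ Real.sqrt n := by
    calc ((mN n:ℝ)^2)^2 ≤ ((Nat.sqrt (Nat.sqrt n) : ℝ))^2 := by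
          apply pow_le_pow_left₀ (by positivity)
          exact_mod_cast hsq
      _ ≤ (Nat.sqrt n : ℝ) := by exact_mod_cast hsq2
      _ ≤ Real.sqrt n := hsqrtn
  have hnpos : (0:ℝ) < n := by exact_mod_cast hn
  have hs : Real.sqrt n * Real.sqrt n = n := Real.mul_self_sqrt hnpos.le
  have hsn : (0:ℝ) < Real.sqrt n := by
    nlinarith
  rw [div_le_div_iff₀ hnpos hsn]
  have e1 : (mN n:ℝ)^2 * ((mN n:ℝ)+1)^2 ≤ 4 * ((mN n:ℝ)^2)^2 := by
    nlinarith [sq_nonneg ((mN n:ℝ)), sq_nonneg ((mN n:ℝ)^2)]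
  have e2 : (mN n:ℝ)^2 * ((mN n:ℝ)+1)^2 ≤ 4 * Real.sqrt n := by linarith
  nlinarith [mul_le_mul_of_nonneg_right e2 hsn.le]

lemma sqrt_tendsto_atTop : Tendsto Real.sqrt atTop atTop := by
  apply tendsto_atTop_atTop_of_monotone (fun a b h => Real.sqrt_le_sqrt h)
  intro b
  exact ⟨(max b 0)^2, by rw [Real.sqrt_sq (le_max_right _ _)]; exact le_max_left _ _⟩

lemma err_tendsto : Tendsto (fun n : ℕ => (16:ℝ) / Real.sqrt n) atTop (nhds 0) := by
  apply Tendsto.div_atTop (tendsto_const_nhds)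
  exact sqrt_tendsto_atTop.comp tendsto_natCast_atTop_atTop

lemma measurable_empF (n : ℕ) (j : ℕ) : Measurable fun S : Fin n → ℕ → Bool => empF n S j := by
  apply Measurable.div_const
  apply Finset.measurable_sum
  intro k _
  have h1 : Measurable fun S : Fin n → ℕ → Bool => S k j :=
    (measurable_pi_apply j).comp (measurable_pi_apply k)
  exact (measurable_from_top (f := fun b : Bool => if b then (1:ℝ) else 0)).comp h1

lemma measurable_finset_sup {α : Type*} [MeasurableSpace α] (s : Finset ℕ) (f : ℕ → α → NNReal)
    (hf : ∀ i, Measurable (f i)) : Measurable fun a => s.sup (fun i => f i a) := by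
  classical
  induction s using Finset.induction_on with
  | empty => simpa using measurable_const
  | insert _ _ hx ih =>
    simp only [Finset.sup_insert]
    exact (hf _).sup ih

lemma measurable_rF (p : ℕ → ℕ → ℝ) (n i : ℕ) : Measurable fun S => rF p n S i := by
  apply measurable_finset_sup
  intro i'
  exact ((measurable_empF n _).sub measurable_const).nnnorm

lemma measurable_selF (p : ℕ → ℕ → ℝ) (n : ℕ) : Measurable (selF p n) := by
  classical
  apply measurable_to_countable'
  intro i
  have hset : ∀ l, MeasurableSet {S : Fin n → ℕ → Bool |
      (l < mN n ∧ ∀ i' < mN n, rF p n S l ≤ rF p n S i') ∨ l = mN n} := by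
    intro l
    by_cases hl : l = mN n
    · simp [hl]
    by_cases hlm : l < mN n
    · have : {S : Fin n → ℕ → Bool |
          (l < mN n ∧ ∀ i' < mN n, rF p n S l ≤ rF p n S i') ∨ l = mN n}
          = ⋂ i' ∈ Finset.range (mN n), {S | rF p n S l ≤ rF p n S i'} := by
        ext S; simp [hl, hlm]
      rw [this]
      exact MeasurableSet.biInter (Finset.range (mN n)).countable_toSet
        (fun i' _ => measurableSet_le (measurable_rF p n l) (measurable_rF p n i'))
    · have : {S : Fin n → ℕ → Bool |
          (l < mN n ∧ ∀ i' < mN n, rF p n S l ≤ rF p n S i') ∨ l = mN n} = ∅ := by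
        ext S; simp [hl, hlm]
      simp [this]
  have : selF p n ⁻¹' {i} = {S | ((i < mN n ∧ ∀ i' < mN n, rF p n S i ≤ rF p n S i') ∨ i = mN n)
      ∧ ∀ l < i, ¬ ((l < mN n ∧ ∀ i' < mN n, rF p n S l ≤ rF p n S i') ∨ l = mN n)} := by
    ext S
    simp only [mem_preimage, mem_singleton_iff, selF, Nat.find_eq_iff, mem_setOf_eq]
  rw [this]
  have : {S : Fin n → ℕ → Bool | ((i < mN n ∧ ∀ i' < mN n, rF p n S i ≤ rF p n S i') ∨ i = mN n)
      ∧ ∀ l < i, ¬ ((l < mN n ∧ ∀ i' < mN n, rF p n S l ≤ rF p n S i') ∨ l = mN n)}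
      = {S | (i < mN n ∧ ∀ i' < mN n, rF p n S i ≤ rF p n S i') ∨ i = mN n}
        ∩ ⋂ l ∈ Finset.range i, {S | (l < mN n ∧ ∀ i' < mN n, rF p n S l ≤ rF p n S i') ∨ l = mN n}ᶜ := by
    ext S; simp
  rw [this]
  exact (hset i).inter (MeasurableSet.biInter (Finset.range i).countable_toSet
    fun l _ => (hset l).compl)

lemma measurable_AF (p : ℕ → ℕ → ℝ) (n : ℕ) : Measurable (AF p n) := by
  apply measurable_pi_lambda
  intro j
  exact (measurable_from_top (f := fun i => p i j)).comp (measurable_selF p n)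

lemma meanVec_mem (μ : Measure (ℕ → Bool)) [IsProbabilityMeasure μ] (j : ℕ) :
    meanVec μ j ∈ Set.Icc (0:ℝ) 1 := by
  constructor
  · exact ENNReal.toReal_nonneg
  · rw [meanVec]
    have h := prob_le_one (μ := μ) (s := {x | x j = true})
    exact ENNReal.toReal_le_of_le_ofReal zero_le_one (by simpa using h)

lemma piMapEval (μ : Measure (ℕ → Bool)) [IsProbabilityMeasure μ] {n : ℕ} (k : Fin n) :
    (Measure.pi fun _ : Fin n => μ).map (fun S => S k) = μ := by
  apply Measure.ext fun s hs => ?_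
  rw [Measure.map_apply (measurable_pi_apply k) hs]
  have heq : (fun S : Fin n → ℕ → Bool => S k) ⁻¹' s
      = Set.pi Set.univ (Function.update (fun _ : Fin n => (Set.univ : Set (ℕ → Bool))) k s) := by
    ext x
    simp only [mem_preimage, Set.mem_pi, mem_univ, forall_true_left]
    constructor
    · intro hx i
      rcases eq_or_ne i k with rfl | hik
      · simpa using hx
      · simp [Function.update_of_ne hik]
    · intro hx
      have := hx k
      simpa using this
  rw [heq, Measure.pi_pi]
  rw [Finset.prod_eq_single k (fun i _ hik => by simp [Function.update_of_ne hik])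
    (fun h => absurd (Finset.mem_univ k) h)]
  simp

-- the basic Bernoulli variable

lemma measurable_X (n : ℕ) (k : Fin n) (j : ℕ) :
    Measurable fun S : Fin n → ℕ → Bool => (if S k j then (1:ℝ) else 0) := by
  have h1 : Measurable fun S : Fin n → ℕ → Bool => S k j :=
    (measurable_pi_apply j).comp (measurable_pi_apply k)
  exact (measurable_from_top (f := fun b : Bool => if b then (1:ℝ) else 0)).comp h1

lemma integral_X (μ : Measure (ℕ → Bool)) [IsProbabilityMeasure μ] {n : ℕ} (k : Fin n) (j : ℕ) :
    ∫ S, (if S k j then (1:ℝ) else 0) ∂(Measure.pi fun _ : Fin n => μ) = meanVec μ j := by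
  have hmeas : Measurable fun x : ℕ → Bool => if x j then (1:ℝ) else 0 :=
    (measurable_from_top (f := fun b : Bool => if b then (1:ℝ) else 0)).comp
      (measurable_pi_apply j)
  have h0 : ∫ S, (if S k j then (1:ℝ) else 0) ∂(Measure.pi fun _ : Fin n => μ)
      = ∫ x, (if x j then (1:ℝ) else 0) ∂μ := by
    calc ∫ S, (if S k j then (1:ℝ) else 0) ∂(Measure.pi fun _ : Fin n => μ)
        = ∫ x, (if x j then (1:ℝ) else 0)
            ∂((Measure.pi fun _ : Fin n => μ).map (fun S => S k)) := by
          rw [integral_map (measurable_pi_apply k).aemeasurable hmeas.aestronglyMeasurable]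
      _ = ∫ x, (if x j then (1:ℝ) else 0) ∂μ := by rw [piMapEval]
  rw [h0]
  have heq : (fun x : ℕ → Bool => if x j then (1:ℝ) else 0)
      = Set.indicator {x : ℕ → Bool | x j = true} (fun _ => (1:ℝ)) := by
    funext x
    by_cases h : x j <;> simp [Set.indicator_apply, h]
  have hms : MeasurableSet {x : ℕ → Bool | x j = true} := by
    have h2 : {x : ℕ → Bool | x j = true} = (fun x : ℕ → Bool => x j) ⁻¹' {true} := rfl
    rw [h2]; exact measurable_pi_apply j (measurableSet_singleton _)
  rw [heq, integral_indicator_const _ hms]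
  simp [meanVec]
  rfl

lemma iIndep_X (μ : Measure (ℕ → Bool)) [IsProbabilityMeasure μ] (n : ℕ) (j : ℕ) :
    iIndepFun
      (fun k (S : Fin n → ℕ → Bool) => if S k j then (1:ℝ) else 0)
      (Measure.pi fun _ : Fin n => μ) := by
  have hev : iIndepFun
      (fun k (S : Fin n → ℕ → Bool) => S k) (Measure.pi fun _ : Fin n => μ) := by
    rw [iIndepFun_iff_measure_inter_preimage_eq_mul]
    intro T sets hsets
    classical
    have heq : (⋂ i ∈ T, (fun S : Fin n → ℕ → Bool => S i) ⁻¹' sets i)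
        = Set.pi Set.univ (fun i => if i ∈ T then sets i else Set.univ) := by
      ext x
      simp only [mem_iInter, mem_preimage, Set.mem_pi, mem_univ, forall_true_left]
      constructor
      · intro hx i
        by_cases hi : i ∈ T <;> simp [hi, hx i]
      · intro hx i hi
        have := hx i
        simpa [hi] using this
    have hP : ∀ (i : Fin n) (s : Set (ℕ → Bool)), MeasurableSet s →
        (Measure.pi fun _ : Fin n => μ) ((fun S : Fin n → ℕ → Bool => S i) ⁻¹' s) = μ s := by
      intro i s hs
      rw [← Measure.map_apply (measurable_pi_apply i) hs, piMapEval]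
    rw [heq, Measure.pi_pi]
    simp only [apply_ite μ, measure_univ]
    rw [Finset.prod_ite_mem Finset.univ T (fun i => μ (sets i)), Finset.univ_inter]
    exact (Finset.prod_congr rfl fun i hi => (hP i (sets i) (hsets i hi)).symm)
  have := hev.comp (fun _ => fun x : ℕ → Bool => if x j then (1:ℝ) else 0)
    (fun _ => (measurable_from_top (f := fun b : Bool => if b then (1:ℝ) else 0)).comp
      (measurable_pi_apply j))
  exact this

lemma memLp_X (μ : Measure (ℕ → Bool)) [IsProbabilityMeasure μ] {n : ℕ} (k : Fin n) (j : ℕ) :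
    MemLp (fun S : Fin n → ℕ → Bool => if S k j then (1:ℝ) else 0) 2
      (Measure.pi fun _ : Fin n => μ) := by
  apply MemLp.of_bound (measurable_X n k j).aestronglyMeasurable 1
  filter_upwards with S
  by_cases h : S k j <;> simp [h]

lemma variance_X_le (μ : Measure (ℕ → Bool)) [IsProbabilityMeasure μ] {n : ℕ} (k : Fin n)
    (j : ℕ) :
    variance (fun S : Fin n → ℕ → Bool => if S k j then (1:ℝ) else 0)
      (Measure.pi fun _ : Fin n => μ) ≤ 1 := by
  set P := Measure.pi fun _ : Fin n => μ
  calc variance (fun S : Fin n → ℕ → Bool => if S k j then (1:ℝ) else 0) P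
      ≤ ∫ S, (fun S : Fin n → ℕ → Bool => if S k j then (1:ℝ) else 0) S ^ 2 ∂P :=
        variance_le_expectation_sq (memLp_X μ k j).aestronglyMeasurable
    _ ≤ ∫ _, (1:ℝ) ∂P := by
        apply integral_mono
        · apply Integrable.mono' (integrable_const 1)
            ((measurable_X n k j).pow_const 2).aestronglyMeasurable
          filter_upwards with S
          by_cases h : S k j <;> simp [h]
        · exact integrable_const 1
        · intro S
          by_cases h : S k j <;> simp [h]
    _ = 1 := by simp

lemma emp_dev (μ : Measure (ℕ → Bool)) [IsProbabilityMeasure μ] {n : ℕ} (hn : 0 < n) (j : ℕ)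
    {δ : ℝ} (hδ : 0 < δ) :
    (Measure.pi fun _ : Fin n => μ) {S | δ ≤ |empF n S j - meanVec μ j|}
      ≤ ENNReal.ofReal (1 / (n * δ^2)) := by
  set P := Measure.pi fun _ : Fin n => μ with hP
  set X : Fin n → (Fin n → ℕ → Bool) → ℝ := fun k S => if S k j then (1:ℝ) else 0 with hX
  set Y : (Fin n → ℕ → Bool) → ℝ := ∑ k : Fin n, X k with hY
  have hYapp : ∀ S, Y S = ∑ k : Fin n, X k S := by
    intro S; rw [hY]; exact Finset.sum_apply S Finset.univ X
  have hXmem : ∀ k : Fin n, MemLp (X k) 2 P := fun k => memLp_X μ k j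
  have hYmem : MemLp Y 2 P := memLp_finset_sum' _ (fun k _ => hXmem k)
  have hEY : P[Y] = n * meanVec μ j := by
    calc P[Y] = ∫ x, ∑ k : Fin n, X k x ∂P := by
          apply integral_congr_ae
          filter_upwards with S
          exact hYapp S
      _ = ∑ k : Fin n, ∫ x, X k x ∂P :=
          integral_finset_sum _ (fun k _ => (hXmem k).integrable one_le_two)
      _ = ∑ _k : Fin n, meanVec μ j := Finset.sum_congr rfl fun k _ => integral_X μ k j
      _ = n * meanVec μ j := by simp
  have hVar : variance Y P ≤ n := by
    rw [hY, IndepFun.variance_sum (fun k _ => hXmem k)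
      (fun k _ l _ hkl => (iIndep_X μ n j).indepFun hkl)]
    calc ∑ k : Fin n, variance (X k) P ≤ ∑ _k : Fin n, (1:ℝ) :=
          Finset.sum_le_sum fun k _ => variance_X_le μ k j
      _ = n := by simp
  have hnpos : (0:ℝ) < n := by exact_mod_cast hn
  have heq : ∀ S, |empF n S j - meanVec μ j| = |Y S - n * meanVec μ j| / n := by
    intro S
    have hemp : empF n S j = Y S / n := by rw [empF, hYapp]
    rw [hemp, show Y S / n - meanVec μ j = (Y S - n * meanVec μ j) / n by field_simp,
      abs_div, abs_of_pos hnpos]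
  have hset : {S | δ ≤ |empF n S j - meanVec μ j|} = {S | (n:ℝ) * δ ≤ |Y S - P[Y]|} := by
    ext S
    simp only [mem_setOf_eq, hEY, heq S, le_div_iff₀ hnpos]
    constructor <;> intro h <;> linarith
  rw [hset]
  have hnδ : 0 < (n:ℝ) * δ := by positivity
  calc P {S | (n:ℝ) * δ ≤ |Y S - P[Y]|}
      ≤ ENNReal.ofReal (variance Y P / ((n:ℝ) * δ)^2) :=
        meas_ge_le_variance_div_sq hYmem hnδ
    _ ≤ ENNReal.ofReal (1 / (n * δ^2)) := by
        apply ENNReal.ofReal_le_ofReal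
        have hnpos : (0:ℝ) < n := by exact_mod_cast hn
        rw [div_le_div_iff₀ (by positivity) (by positivity)]
        have hv0 : (0:ℝ) ≤ variance Y P := variance_nonneg _ _
        nlinarith [hVar]

/-- The integral bound for a fixed sample size. -/
lemma integral_bound (p : ℕ → ℕ → ℝ) (hp : ∀ i j, p i j ∈ Set.Icc (0:ℝ) 1)
    (μ : Measure (ℕ → Bool)) [IsProbabilityMeasure μ] {n : ℕ} (hn : 0 < n)
    {i₀ : ℕ} (hi₀ : i₀ < mN n) :
    ∫ S, supDist (AF p n S) (meanVec μ) ∂(Measure.pi fun _ : Fin n => μ)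
      ≤ 3 * supDist (meanVec μ) (p i₀) + 3 * dN n
        + (mN n)^2 * (1 / (n * (dN n)^2)) := by
  set P := Measure.pi fun _ : Fin n => μ with hPdef
  set q : ℕ → ℝ := meanVec μ with hqdef
  have hq : ∀ j, q j ∈ Set.Icc (0:ℝ) 1 := meanVec_mem μ
  set m := mN n with hmdef
  set δ := dN n with hδdef
  have hδ : 0 < δ := dN_pos n
  set c : ℝ := 3 * supDist q (p i₀) + 3 * δ with hcdef
  have hc0 : 0 ≤ c := by
    have := supDist_nonneg q (p i₀)
    rw [hcdef]; linarith
  set E : Set (Fin n → ℕ → Bool) := ⋂ i ∈ Finset.range m, ⋂ i' ∈ Finset.range m,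
    {S | |empF n S (JF p δ i i') - q (JF p δ i i')| < δ} with hEdef
  have hBmeas : ∀ i i' : ℕ, MeasurableSet
      {S : Fin n → ℕ → Bool | |empF n S (JF p δ i i') - q (JF p δ i i')| < δ} := by
    intro i i'
    exact measurableSet_lt (((measurable_empF n _).sub measurable_const).abs) measurable_const
  have hEmeas : MeasurableSet E :=
    MeasurableSet.biInter (Finset.range m).countable_toSet fun i _ =>
      MeasurableSet.biInter (Finset.range m).countable_toSet fun i' _ => hBmeas i i'
  have habs1 : ∀ i : ℕ, ∀ j, |p i j - q j| ≤ 1 := by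
    intro i j
    have h1 := hp i j; have h2 := hq j
    rw [abs_le]
    exact ⟨by linarith [h1.1, h1.2, h2.1, h2.2], by linarith [h1.1, h1.2, h2.1, h2.2]⟩
  have hf1 : ∀ S, supDist (AF p n S) q ≤ 1 := fun S => supDist_le (habs1 _)
  have hf0 : ∀ S, 0 ≤ supDist (AF p n S) q := fun S => supDist_nonneg _ _
  have hfmeas : Measurable fun S => supDist (AF p n S) q := by
    have : (fun S => supDist (AF p n S) q)
        = (fun i : ℕ => supDist (p i) q) ∘ (selF p n) := rfl
    rw [this]
    exact (measurable_from_top (f := fun i : ℕ => supDist (p i) q)).comp (measurable_selF p n)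
  have hfint : Integrable (fun S => supDist (AF p n S) q) P := by
    apply Integrable.mono' (integrable_const (1:ℝ)) hfmeas.aestronglyMeasurable
    filter_upwards with S
    rw [Real.norm_eq_abs, abs_of_nonneg (hf0 S)]
    exact hf1 S
  have hgint : Integrable (fun S => c + Eᶜ.indicator (fun _ => (1:ℝ)) S) P :=
    (integrable_const c).add ((integrable_const (1:ℝ)).indicator hEmeas.compl)
  have hle : ∀ S, supDist (AF p n S) q ≤ c + Eᶜ.indicator (fun _ => (1:ℝ)) S := by
    intro S
    by_cases hS : S ∈ E
    · have hE' : ∀ i < m, ∀ i' < m,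
          |empF n S (JF p δ i i') - q (JF p δ i i')| < δ := by
        intro i hi i' hi'
        have := Set.mem_iInter₂.mp (Set.mem_iInter₂.mp hS i (Finset.mem_range.mpr hi)) i'
          (Finset.mem_range.mpr hi')
        exact this
      have h1 : supDist (AF p n S) q ≤ 3 * supDist q (p i₀) + 3 * δ :=
        sel_close p hp q hq S hi₀ hE'
      have h2 : Eᶜ.indicator (fun _ => (1:ℝ)) S = 0 := by
        apply Set.indicator_of_notMem
        simpa using hS
      rw [h2]
      linarith
    · have h2 : Eᶜ.indicator (fun _ => (1:ℝ)) S = 1 := Set.indicator_of_mem (by simpa using hS) _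
      rw [h2]
      linarith [hf1 S]
  have hint_le : ∫ S, supDist (AF p n S) q ∂P ≤ c + (P Eᶜ).toReal := by
    calc ∫ S, supDist (AF p n S) q ∂P
        ≤ ∫ S, (c + Eᶜ.indicator (fun _ => (1:ℝ)) S) ∂P := integral_mono hfint hgint hle
      _ = c + (P Eᶜ).toReal := by
          rw [integral_add (integrable_const c)
            ((integrable_const (1:ℝ)).indicator hEmeas.compl)]
          rw [integral_const, integral_indicator_const _ hEmeas.compl]
          simp
          rfl
  have hPEc : (P Eᶜ).toReal ≤ (m:ℝ)^2 * (1 / (n * δ^2)) := by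
    have hEc : Eᶜ ⊆ ⋃ i ∈ Finset.range m, ⋃ i' ∈ Finset.range m,
        {S | δ ≤ |empF n S (JF p δ i i') - q (JF p δ i i')|} := by
      intro S hS
      rw [hEdef] at hS
      simp only [Set.compl_iInter, Set.mem_iUnion, mem_compl_iff, mem_setOf_eq] at hS
      obtain ⟨i, hi, i', hi', h⟩ := hS
      push_neg at h
      exact Set.mem_biUnion hi (Set.mem_biUnion hi' h)
    have hstep : P Eᶜ ≤ ENNReal.ofReal ((m:ℝ)^2 * (1 / (n * δ^2))) := by
      calc P Eᶜ ≤ P (⋃ i ∈ Finset.range m, ⋃ i' ∈ Finset.range m,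
            {S | δ ≤ |empF n S (JF p δ i i') - q (JF p δ i i')|}) := measure_mono hEc
        _ ≤ ∑ i ∈ Finset.range m, P (⋃ i' ∈ Finset.range m,
            {S | δ ≤ |empF n S (JF p δ i i') - q (JF p δ i i')|}) :=
            measure_biUnion_finset_le _ _
        _ ≤ ∑ i ∈ Finset.range m, ∑ i' ∈ Finset.range m,
            P {S | δ ≤ |empF n S (JF p δ i i') - q (JF p δ i i')|} :=
            Finset.sum_le_sum fun i _ => measure_biUnion_finset_le _ _
        _ ≤ ∑ _i ∈ Finset.range m, ∑ _i' ∈ Finset.range m, ENNReal.ofReal (1 / (n * δ^2)) :=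
            Finset.sum_le_sum fun i _ => Finset.sum_le_sum fun i' _ => emp_dev μ hn _ hδ
        _ = (m : ℝ≥0∞) * ((m : ℝ≥0∞) * ENNReal.ofReal (1 / (n * δ^2))) := by
            simp [Finset.sum_const, nsmul_eq_mul]
        _ = ENNReal.ofReal ((m:ℝ)^2 * (1 / (n * δ^2))) := by
            rw [ENNReal.ofReal_mul (by positivity)]
            rw [show ENNReal.ofReal ((m:ℝ)^2) = ((m^2 : ℕ) : ℝ≥0∞) by
              rw [← ENNReal.ofReal_natCast (m^2)]; push_cast; ring_nf]
            push_cast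
            ring
    exact ENNReal.toReal_le_of_le_ofReal (by positivity) hstep
  calc ∫ S, supDist (AF p n S) q ∂P ≤ c + (P Eᶜ).toReal := hint_le
    _ ≤ 3 * supDist q (p i₀) + 3 * δ + (m:ℝ)^2 * (1 / (n * δ^2)) := by
        rw [hcdef]; linarith

end UMEProof

/-- If a collection of probability measures on `{0,1}^ℕ` is separable in its means,
then it is UME-learnable. -/
theorem separable_implies_UMELearnable (Q : Set (Measure (ℕ → Bool)))
    (hQprob : ∀ μ ∈ Q, IsProbabilityMeasure μ)
    (hsep : SeparableInMeans Q) : UMELearnable Q := by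
  classical
  open UMEProof in
  have hcov : ∀ k : ℕ, ∃ D : Set (ℕ → ℝ), D.Countable ∧
      (∀ p ∈ D, ∀ j, p j ∈ Set.Icc (0:ℝ) 1) ∧
      ∀ q ∈ meanVec '' Q, ∃ p ∈ D, supDist q p < 1/(k+1) := by
    intro k
    exact hsep (1/(k+1)) (by positivity)
  choose D hDc hD01 hDcov using hcov
  set D' : Set (ℕ → ℝ) := insert (fun _ => 0) (⋃ k, D k) with hD'
  have hD'c : D'.Countable := ((Set.countable_iUnion hDc).insert _)
  have hD'ne : D'.Nonempty := ⟨_, Set.mem_insert _ _⟩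
  obtain ⟨p, hp_range⟩ := hD'c.exists_eq_range hD'ne
  have hp01 : ∀ i j, p i j ∈ Set.Icc (0:ℝ) 1 := by
    intro i j
    have hmem : p i ∈ D' := hp_range ▸ Set.mem_range_self i
    rcases Set.mem_insert_iff.mp hmem with h | h
    · rw [h]; exact ⟨le_refl 0, zero_le_one⟩
    · obtain ⟨k, hk⟩ := Set.mem_iUnion.mp h
      exact hD01 k _ hk j
  have hpcov : ∀ μ' ∈ Q, ∀ ε : ℝ, 0 < ε → ∃ i, supDist (meanVec μ') (p i) < ε := by
    intro μ' hμ' ε hε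
    obtain ⟨k, hk⟩ := exists_nat_one_div_lt hε
    obtain ⟨pt, hpt, hptlt⟩ := hDcov k (meanVec μ') ⟨μ', hμ', rfl⟩
    have hptD' : pt ∈ D' := Set.mem_insert_iff.mpr (Or.inr (Set.mem_iUnion.mpr ⟨k, hpt⟩))
    rw [hp_range] at hptD'
    obtain ⟨i, hi⟩ := hptD'
    refine ⟨i, ?_⟩
    rw [hi]
    exact lt_trans hptlt hk
  refine ⟨UMEProof.AF p, UMEProof.measurable_AF p, fun n S j => hp01 _ j, ?_⟩
  intro μ hμ
  haveI : IsProbabilityMeasure μ := hQprob μ hμ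
  rw [Metric.tendsto_atTop]
  intro α hα
  obtain ⟨i₀, hi₀⟩ := hpcov μ hμ (α/8) (by linarith)
  have hev : ∀ᶠ n : ℕ in atTop,
      dist (∫ S, supDist (UMEProof.AF p n S) (meanVec μ)
        ∂(Measure.pi fun _ : Fin n => μ)) 0 < α := by
    filter_upwards [UMEProof.mN_tendsto.eventually_ge_atTop (i₀+1),
      UMEProof.dN_tendsto.eventually_lt_const (show (0:ℝ) < α/8 by linarith),
      UMEProof.err_tendsto.eventually_lt_const (show (0:ℝ) < α/8 by linarith),
      eventually_ge_atTop 1] with n h1 h2 h3 h4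
    have hn : 0 < n := h4
    have hi₀n : i₀ < UMEProof.mN n := by omega
    have hb := UMEProof.integral_bound p hp01 μ hn hi₀n
    have herr := UMEProof.err_le h4
    have hδpos := UMEProof.dN_pos n
    have hnonneg : 0 ≤ ∫ S, supDist (UMEProof.AF p n S) (meanVec μ)
        ∂(Measure.pi fun _ : Fin n => μ) :=
      integral_nonneg fun S => UMEProof.supDist_nonneg _ _
    rw [Real.dist_0_eq_abs, abs_of_nonneg hnonneg]
    calc ∫ S, supDist (UMEProof.AF p n S) (meanVec μ) ∂(Measure.pi fun _ : Fin n => μ)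
        ≤ 3 * supDist (meanVec μ) (p i₀) + 3 * UMEProof.dN n
          + (UMEProof.mN n)^2 * (1 / (n * (UMEProof.dN n)^2)) := hb
      _ < α := by linarith
  exact eventually_atTop.mp hev
end

section
/- If a collection Q of probability measures on {0,1}^ℕ is non-separable in its means, then there exists γ > 0 such that Mean(Q) is infinitely sequentially γ-fat-shattered, i.e., for every depth d ∈ ℕ there exists a depth-d tree assignment that Mean(Q) γ-shatters. -/
open MeasureTheory Filter

/-- `M` γ-shatters the depth-`d` tree assignment with coordinate labels `idx` and values
`r` (indexed by binary strings of length `< d`): for every `b ∈ {0,1}^d` there is `q ∈ M`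
following the root-to-leaf path prescribed by `b` — at the node reached by the prefix
`(b_1,…,b_j)`, the coordinate `idx` of `q` is `≤ r − γ` if the next bit is `0` and
`≥ r + γ` if the next bit is `1`. -/
def FatShatters (M : Set (ℕ → ℝ)) (γ : ℝ) (d : ℕ)
    (idx : List Bool → ℕ) (r : List Bool → ℝ) : Prop :=
  ∀ b : Fin d → Bool, ∃ q ∈ M, ∀ j : Fin d,
    (b j = false → q (idx ((List.ofFn b).take j.1)) ≤ r ((List.ofFn b).take j.1) - γ) ∧
    (b j = true → r ((List.ofFn b).take j.1) + γ ≤ q (idx ((List.ofFn b).take j.1)))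

lemma hcc_mono {A B : Set (ℕ → ℝ)} {ε : ℝ} (hAB : A ⊆ B)
    (h : HasCountableCover B ε) : HasCountableCover A ε := by
  obtain ⟨D, hc, h01, hcov⟩ := h
  exact ⟨D, hc, h01, fun q hq => hcov q (hAB hq)⟩

lemma hcc_empty (ε : ℝ) : HasCountableCover (∅ : Set (ℕ → ℝ)) ε :=
  ⟨∅, Set.countable_empty, by simp, by simp⟩

lemma hcc_union {A B : Set (ℕ → ℝ)} {ε : ℝ}
    (hA : HasCountableCover A ε) (hB : HasCountableCover B ε) :
    HasCountableCover (A ∪ B) ε := by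
  obtain ⟨D1, hc1, h011, hcov1⟩ := hA
  obtain ⟨D2, hc2, h012, hcov2⟩ := hB
  refine ⟨D1 ∪ D2, hc1.union hc2, ?_, ?_⟩
  · rintro p (hp | hp) j
    · exact h011 p hp j
    · exact h012 p hp j
  · rintro q (hq | hq)
    · obtain ⟨p, hp, hd⟩ := hcov1 q hq; exact ⟨p, Or.inl hp, hd⟩
    · obtain ⟨p, hp, hd⟩ := hcov2 q hq; exact ⟨p, Or.inr hp, hd⟩

lemma hcc_iUnion {ι : Type*} [Countable ι] {B : ι → Set (ℕ → ℝ)} {ε : ℝ}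
    (h : ∀ i, HasCountableCover (B i) ε) :
    HasCountableCover (⋃ i, B i) ε := by
  choose D hc h01 hcov using h
  refine ⟨⋃ i, D i, Set.countable_iUnion hc, ?_, ?_⟩
  · rintro p hp j
    obtain ⟨i, hi⟩ := Set.mem_iUnion.1 hp
    exact h01 i p hi j
  · rintro q hq
    obtain ⟨i, hi⟩ := Set.mem_iUnion.1 hq
    obtain ⟨p, hp, hd⟩ := hcov i q hi
    exact ⟨p, Set.mem_iUnion.2 ⟨i, hp⟩, hd⟩

/-- Key splitting lemma: a set with no countable `ε`-cover splits at some coordinate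
and threshold in `(0,1)` into two halves, each with no countable `ε`-cover. -/
lemma split_lemma (ε : ℝ) (hε : 0 < ε) (A : Set (ℕ → ℝ))
    (hA01 : ∀ q ∈ A, ∀ j, q j ∈ Set.Icc (0:ℝ) 1)
    (hbig : ¬ HasCountableCover A ε) :
    ∃ (i : ℕ) (r : ℝ), r ∈ Set.Ioo (0:ℝ) 1 ∧
      ¬ HasCountableCover (A ∩ {q | q i ≤ r - ε/5}) ε ∧
      ¬ HasCountableCover (A ∩ {q | r + ε/5 ≤ q i}) ε := by
  by_contra hcon
  push_neg at hcon
  set γ := ε/5 with hγ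
  have hγpos : 0 < γ := by positivity
  -- for every coordinate and every grid threshold, one of the two sides is small
  have hS : ∀ p : ℕ × ℕ, ∃ B : Set (ℕ → ℝ), HasCountableCover B ε ∧
      (B = A ∩ {q | q p.1 ≤ (p.2:ℝ)*γ - γ} ∨ B = A ∩ {q | (p.2:ℝ)*γ + γ ≤ q p.1}) := by
    rintro ⟨i, k⟩
    by_cases h1 : (k:ℝ)*γ < 1
    · by_cases h0 : 0 < (k:ℝ)*γ
      · rcases Classical.em (HasCountableCover (A ∩ {q | q i ≤ (k:ℝ)*γ - γ}) ε) with hl | hl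
        · exact ⟨_, hl, Or.inl rfl⟩
        · exact ⟨_, hcon i ((k:ℝ)*γ) ⟨h0, h1⟩ hl, Or.inr rfl⟩
      · -- k = 0, lower side is empty
        refine ⟨_, ?_, Or.inl rfl⟩
        have : A ∩ {q | q i ≤ (k:ℝ)*γ - γ} = ∅ := by
          ext q
          simp only [Set.mem_inter_iff, Set.mem_setOf_eq, Set.mem_empty_iff_false, iff_false]
          rintro ⟨hqA, hqi⟩
          have h1' := (hA01 q hqA i).1
          have : (0:ℝ) ≤ (k:ℝ)*γ := by positivity
          push_neg at h0
          nlinarith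
        rw [this]; exact hcc_empty ε
    · -- kγ ≥ 1, upper side is empty
      refine ⟨_, ?_, Or.inr rfl⟩
      have : A ∩ {q | (k:ℝ)*γ + γ ≤ q i} = ∅ := by
        ext q
        simp only [Set.mem_inter_iff, Set.mem_setOf_eq, Set.mem_empty_iff_false, iff_false]
        rintro ⟨hqA, hqi⟩
        have h2' := (hA01 q hqA i).2
        push_neg at h1
        nlinarith
      rw [this]; exact hcc_empty ε
  choose B hBsmall hBeq using hS
  set A' := A \ ⋃ p, B p with hA'
  -- any two elements of A' are within 4γ in every coordinate
  have hclose : ∀ q ∈ A', ∀ q' ∈ A', ∀ i : ℕ, q i - q' i ≤ 4*γ := by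
    intro q hq q' hq' i
    by_contra hgt
    push_neg at hgt
    have hq'0 : (0:ℝ) ≤ q' i := (hA01 q' hq'.1 i).1
    set k : ℕ := ⌊q' i / γ⌋₊ + 2 with hk
    have hfl : ((⌊q' i / γ⌋₊ : ℝ)) ≤ q' i / γ := Nat.floor_le (by positivity)
    have hfl2 : q' i / γ < (⌊q' i / γ⌋₊ : ℝ) + 1 := Nat.lt_floor_add_one _
    have hkγ1 : q' i + γ < (k:ℝ)*γ := by
      have : (k:ℝ) = (⌊q' i / γ⌋₊ : ℝ) + 2 := by push_cast [hk]; ring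
      rw [this]
      have := (div_lt_iff₀ hγpos).1 hfl2
      nlinarith
    have hkγ2 : (k:ℝ)*γ < q i - γ := by
      have : (k:ℝ) = (⌊q' i / γ⌋₊ : ℝ) + 2 := by push_cast [hk]; ring
      rw [this]
      have hfl' : (⌊q' i / γ⌋₊ : ℝ) * γ ≤ q' i := by
        have := mul_le_mul_of_nonneg_right hfl (le_of_lt hγpos)
        rwa [div_mul_cancel₀] at this
        exact ne_of_gt hγpos
      nlinarith
    rcases hBeq (i, k) with hB | hB
    · -- B = lower side, but q' is in it
      have : q' ∈ B (i, k) := by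
        rw [hB]
        exact ⟨hq'.1, by simp only [Set.mem_setOf_eq]; linarith⟩
      exact hq'.2 (Set.mem_iUnion.2 ⟨(i, k), this⟩)
    · -- B = upper side, but q is in it
      have : q ∈ B (i, k) := by
        rw [hB]
        exact ⟨hq.1, by simp only [Set.mem_setOf_eq]; linarith⟩
      exact hq.2 (Set.mem_iUnion.2 ⟨(i, k), this⟩)
  -- A' has a countable cover
  have hA'small : HasCountableCover A' ε := by
    rcases Set.eq_empty_or_nonempty A' with he | ⟨q0, hq0⟩
    · rw [he]; exact hcc_empty ε
    · refine ⟨{q0}, Set.countable_singleton _, ?_, ?_⟩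
      · intro p hp j
        rw [Set.mem_singleton_iff] at hp
        subst hp
        exact hA01 _ hq0.1 j
      · intro q hq
        refine ⟨q0, rfl, ?_⟩
        have hb : supDist q q0 ≤ 4*γ := by
          apply ciSup_le
          intro j
          rw [abs_sub_le_iff]
          exact ⟨hclose q hq q0 hq0 j, hclose q0 hq0 q hq j⟩
        calc supDist q q0 ≤ 4*γ := hb
          _ < ε := by rw [hγ]; linarith
  -- hence A has a countable cover: contradiction
  apply hbig
  apply hcc_mono (B := A' ∪ ⋃ p, B p)
  · intro q hq
    by_cases h : q ∈ ⋃ p, B p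
    · exact Or.inr h
    · exact Or.inl ⟨hq, h⟩
  · exact hcc_union hA'small (hcc_iUnion hBsmall)

/-- Recursion: a set with no countable `ε`-cover is `(ε/5)`-fat-shattered at all depths. -/
lemma shatter_rec (ε : ℝ) (hε : 0 < ε) :
    ∀ (d : ℕ) (A : Set (ℕ → ℝ)), (∀ q ∈ A, ∀ j, q j ∈ Set.Icc (0:ℝ) 1) →
    ¬ HasCountableCover A ε →
    ∃ (idx : List Bool → ℕ) (r : List Bool → ℝ),
      (∀ s : List Bool, s.length < d → r s ∈ Set.Ioo (0:ℝ) 1) ∧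
      ∀ b : Fin d → Bool, ∃ q ∈ A, ∀ j : Fin d,
        (b j = false → q (idx ((List.ofFn b).take j.1)) ≤ r ((List.ofFn b).take j.1) - ε/5) ∧
        (b j = true → r ((List.ofFn b).take j.1) + ε/5 ≤ q (idx ((List.ofFn b).take j.1))) := by
  intro d
  induction d with
  | zero =>
    intro A hA01 hbig
    have hne : A.Nonempty := by
      rcases Set.eq_empty_or_nonempty A with he | h
      · exfalso; apply hbig; rw [he]; exact hcc_empty ε
      · exact h
    obtain ⟨q, hq⟩ := hne
    exact ⟨fun _ => 0, fun _ => 1/2, fun s hs => by omega, fun b => ⟨q, hq, fun j => j.elim0⟩⟩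
  | succ d IH =>
    intro A hA01 hbig
    obtain ⟨i, r0, hr0, hbig0, hbig1⟩ := split_lemma ε hε A hA01 hbig
    set A0 := A ∩ {q | q i ≤ r0 - ε/5} with hA0
    set A1 := A ∩ {q | r0 + ε/5 ≤ q i} with hA1
    obtain ⟨idx0, rr0, hrr0, hsh0⟩ := IH A0 (fun q hq => hA01 q hq.1) hbig0
    obtain ⟨idx1, rr1, hrr1, hsh1⟩ := IH A1 (fun q hq => hA01 q hq.1) hbig1
    refine ⟨fun s => match s with | [] => i | c :: t => cond c (idx1 t) (idx0 t),
            fun s => match s with | [] => r0 | c :: t => cond c (rr1 t) (rr0 t), ?_, ?_⟩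
    · intro s hs
      match s with
      | [] => exact hr0
      | false :: t => simpa using hrr0 t (by simpa using hs)
      | true :: t => simpa using hrr1 t (by simpa using hs)
    · intro b
      have hofn : List.ofFn b = b 0 :: List.ofFn (fun j : Fin d => b j.succ) :=
        List.ofFn_succ
      cases hb0 : b 0 with
      | false =>
        obtain ⟨q, hq, hcon⟩ := hsh0 (fun j => b j.succ)
        refine ⟨q, hq.1, ?_⟩
        intro j
        refine Fin.cases ?_ (fun j' => ?_) j
        · constructor
          · intro _
            simpa using hq.2
          · intro h; rw [hb0] at h; exact absurd h (by simp)
        · have hval : (Fin.succ j').1 = j'.1 + 1 := rfl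
          rw [hval, hofn, hb0, List.take_succ_cons]
          simpa using hcon j'
      | true =>
        obtain ⟨q, hq, hcon⟩ := hsh1 (fun j => b j.succ)
        refine ⟨q, hq.1, ?_⟩
        intro j
        refine Fin.cases ?_ (fun j' => ?_) j
        · constructor
          · intro h; rw [hb0] at h; exact absurd h (by simp)
          · intro _
            simpa using hq.2
        · have hval : (Fin.succ j').1 = j'.1 + 1 := rfl
          rw [hval, hofn, hb0, List.take_succ_cons]
          simpa using hcon j'

/-- If a collection `Q` of probability measures on `{0,1}^ℕ` is non-separable in its
means, then there is a `γ > 0` such that `Mean(Q)` is infinitely sequentially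
`γ`-fat-shattered: for every depth `d` there is a depth-`d` tree assignment (with values
in `(0,1)`) that `Mean(Q)` `γ`-shatters. -/
theorem nonseparable_implies_fatShattered (Q : Set (Measure (ℕ → Bool)))
    (hQprob : ∀ μ ∈ Q, IsProbabilityMeasure μ)
    (hnonsep : ¬ (∀ ε : ℝ, 0 < ε → HasCountableCover (meanVec '' Q) ε)) :
    ∃ γ : ℝ, 0 < γ ∧ ∀ d : ℕ, ∃ (idx : List Bool → ℕ) (r : List Bool → ℝ),
      (∀ s : List Bool, s.length < d → r s ∈ Set.Ioo (0 : ℝ) 1) ∧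
      FatShatters (meanVec '' Q) γ d idx r := by
  push_neg at hnonsep
  obtain ⟨ε, hε, hbig⟩ := hnonsep
  have hM01 : ∀ q ∈ meanVec '' Q, ∀ j, q j ∈ Set.Icc (0:ℝ) 1 := by
    rintro q ⟨μ, hμ, rfl⟩ j
    haveI := hQprob μ hμ
    constructor
    · exact ENNReal.toReal_nonneg
    · have h1 : μ {x | x j = true} ≤ 1 := prob_le_one
      exact ENNReal.toReal_le_of_le_ofReal zero_le_one (by simpa using h1)
  refine ⟨ε/5, by positivity, fun d => ?_⟩
  obtain ⟨idx, r, hr, hsh⟩ := shatter_rec ε hε d (meanVec '' Q) hM01 hbig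
  exact ⟨idx, r, hr, hsh⟩
end

section
/- Let γ > 0 and let Q be a collection of probability measures on {0,1}^ℕ such that Mean(Q) has no countable 3γ-cover. Then there exist a coordinate i ∈ ℕ, a value r ∈ (0,1), and subcollections Q_1, Q_2 ⊆ Q such that neither Mean(Q_1) nor Mean(Q_2) has a countable 3γ-cover, every q ∈ Mean(Q_1) satisfies q_i ≥ r + γ, and every q ∈ Mean(Q_2) satisfies q_i ≤ r − γ. -/
open MeasureTheory Filter

lemma meanVec_nonneg {ι : Type*} (μ : Measure (ι → Bool)) (j : ι) : 0 ≤ meanVec μ j :=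
  ENNReal.toReal_nonneg

lemma meanVec_le_one {ι : Type*} (μ : Measure (ι → Bool)) [IsProbabilityMeasure μ] (j : ι) :
    meanVec μ j ≤ 1 := by
  have h : μ {x | x j = true} ≤ 1 := prob_le_one
  calc (μ {x | x j = true}).toReal ≤ (1 : ENNReal).toReal :=
        ENNReal.toReal_mono ENNReal.one_ne_top h
    _ = 1 := by simp

lemma hasCountableCover_empty {ι : Type*} (ε : ℝ) :
    HasCountableCover (∅ : Set (ι → ℝ)) ε :=
  ⟨∅, Set.countable_empty, by simp, by simp⟩

/-- If `Mean(Q)` has no countable `3γ`-cover, then there are a coordinate `i`, a value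
`r ∈ (0,1)`, and subcollections `Q₁, Q₂ ⊆ Q` such that neither `Mean(Q₁)` nor `Mean(Q₂)`
has a countable `3γ`-cover, every `q ∈ Mean(Q₁)` satisfies `q i ≥ r + γ`, and every
`q ∈ Mean(Q₂)` satisfies `q i ≤ r − γ`. -/
theorem subset_selection (γ : ℝ) (hγ : 0 < γ) (Q : Set (Measure (ℕ → Bool)))
    (hQprob : ∀ μ ∈ Q, IsProbabilityMeasure μ)
    (hnc : ¬ HasCountableCover (meanVec '' Q) (3 * γ)) :
    ∃ (i : ℕ) (r : ℝ), r ∈ Set.Ioo (0 : ℝ) 1 ∧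
      ∃ Q₁ Q₂ : Set (Measure (ℕ → Bool)), Q₁ ⊆ Q ∧ Q₂ ⊆ Q ∧
        ¬ HasCountableCover (meanVec '' Q₁) (3 * γ) ∧
        ¬ HasCountableCover (meanVec '' Q₂) (3 * γ) ∧
        (∀ q ∈ meanVec '' Q₁, r + γ ≤ q i) ∧
        (∀ q ∈ meanVec '' Q₂, q i ≤ r - γ) := by
  by_contra h
  push_neg at h
  -- For every coordinate i and r ∈ (0,1), one of the two sides has a countable cover.
  have key : ∀ (i : ℕ) (r : ℝ), r ∈ Set.Ioo (0 : ℝ) 1 →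
      HasCountableCover (meanVec '' {μ ∈ Q | r + γ ≤ meanVec μ i}) (3 * γ) ∨
      HasCountableCover (meanVec '' {μ ∈ Q | meanVec μ i ≤ r - γ}) (3 * γ) := by
    intro i r hr
    by_contra hc
    push_neg at hc
    have h1 : ∀ q ∈ meanVec '' {μ ∈ Q | r + γ ≤ meanVec μ i}, r + γ ≤ q i := by
      rintro q ⟨μ, hμ, rfl⟩; exact hμ.2
    obtain ⟨q, ⟨μ, hμ, rfl⟩, hlt⟩ :=
      h i r hr _ _ (fun μ hμ => hμ.1) (fun μ hμ => hμ.1) hc.1 hc.2 h1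
    exact absurd hμ.2 (not_le.2 hlt)
  -- Choose, for each (i, s) ∈ ℕ × ℚ, a "bad" set B i s with a countable cover,
  -- containing one of the two sides when (s : ℝ) ∈ (0,1).
  have hB : ∀ (i : ℕ) (s : ℚ), ∃ B : Set (Measure (ℕ → Bool)),
      HasCountableCover (meanVec '' B) (3 * γ) ∧
      ((s : ℝ) ∈ Set.Ioo (0 : ℝ) 1 →
        {μ ∈ Q | (s : ℝ) + γ ≤ meanVec μ i} ⊆ B ∨
        {μ ∈ Q | meanVec μ i ≤ (s : ℝ) - γ} ⊆ B) := by
    intro i s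
    by_cases hs : (s : ℝ) ∈ Set.Ioo (0 : ℝ) 1
    · rcases key i s hs with hcov | hcov
      · exact ⟨_, hcov, fun _ => Or.inl subset_rfl⟩
      · exact ⟨_, hcov, fun _ => Or.inr subset_rfl⟩
    · exact ⟨∅, by simpa using hasCountableCover_empty (ι := ℕ) (3 * γ), fun hs' => absurd hs' hs⟩
  choose B hBcov hBside using hB
  choose D hDcount hDmem hDcover using fun i s => hBcov i s
  set Bad : Set (Measure (ℕ → Bool)) := ⋃ (i : ℕ), ⋃ (s : ℚ), B i s with hBadDef
  -- Any two measures in Q \ Bad have means within 2γ in every coordinate.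
  have oneside : ∀ μ, μ ∈ Q → μ ∉ Bad → ∀ ν, ν ∈ Q → ν ∉ Bad → ∀ j,
      meanVec μ j - meanVec ν j ≤ 2 * γ := by
    intro μ hμQ hμ ν hνQ hν j
    by_contra hgt
    push_neg at hgt
    have ha : 0 ≤ meanVec ν j := meanVec_nonneg ν j
    have hb : meanVec μ j ≤ 1 := by
      haveI := hQprob μ hμQ
      exact meanVec_le_one μ j
    obtain ⟨s, hs1, hs2⟩ := exists_rat_btwn
      (show meanVec ν j + γ < meanVec μ j - γ by linarith)
    have hsIoo : (s : ℝ) ∈ Set.Ioo (0 : ℝ) 1 := ⟨by linarith, by linarith⟩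
    rcases hBside j s hsIoo with hsub | hsub
    · exact hμ (Set.mem_iUnion.2 ⟨j, Set.mem_iUnion.2 ⟨s, hsub ⟨hμQ, by linarith⟩⟩⟩)
    · exact hν (Set.mem_iUnion.2 ⟨j, Set.mem_iUnion.2 ⟨s, hsub ⟨hνQ, by linarith⟩⟩⟩)
  have hclose : ∀ μ, μ ∈ Q → μ ∉ Bad → ∀ ν, ν ∈ Q → ν ∉ Bad →
      supDist (meanVec μ) (meanVec ν) < 3 * γ := by
    intro μ hμQ hμ ν hνQ hν
    have hle : supDist (meanVec μ) (meanVec ν) ≤ 2 * γ := by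
      apply Real.iSup_le _ (by linarith)
      intro j
      rw [abs_sub_le_iff]
      exact ⟨oneside μ hμQ hμ ν hνQ hν j, oneside ν hνQ hν μ hμQ hμ j⟩
    linarith
  -- Build a countable 3γ-cover of Mean(Q), contradicting hnc.
  apply hnc
  have hmemIcc : ∀ μ ∈ Q, ∀ j, meanVec μ j ∈ Set.Icc (0 : ℝ) 1 := by
    intro μ hμ j
    haveI := hQprob μ hμ
    exact ⟨meanVec_nonneg μ j, meanVec_le_one μ j⟩
  rcases Set.eq_empty_or_nonempty (Q \ Bad) with hQ' | ⟨μ₀, hμ₀Q, hμ₀⟩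
  · refine ⟨⋃ (i : ℕ), ⋃ (s : ℚ), D i s,
      Set.countable_iUnion (fun i => Set.countable_iUnion (fun s => hDcount i s)), ?_, ?_⟩
    · intro p hp j
      obtain ⟨i, hp⟩ := Set.mem_iUnion.1 hp
      obtain ⟨s, hp⟩ := Set.mem_iUnion.1 hp
      exact hDmem i s p hp j
    · rintro q ⟨μ, hμ, rfl⟩
      have hμBad : μ ∈ Bad := by
        by_contra hcon
        exact absurd (Set.eq_empty_iff_forall_notMem.1 hQ' μ) (fun hh => hh ⟨hμ, hcon⟩)
      obtain ⟨i, hmem⟩ := Set.mem_iUnion.1 hμBad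
      obtain ⟨s, hmem⟩ := Set.mem_iUnion.1 hmem
      obtain ⟨p, hp, hdist⟩ := hDcover i s _ ⟨μ, hmem, rfl⟩
      exact ⟨p, Set.mem_iUnion.2 ⟨i, Set.mem_iUnion.2 ⟨s, hp⟩⟩, hdist⟩
  · refine ⟨insert (meanVec μ₀) (⋃ (i : ℕ), ⋃ (s : ℚ), D i s),
      Set.Countable.insert _
        (Set.countable_iUnion (fun i => Set.countable_iUnion (fun s => hDcount i s))), ?_, ?_⟩
    · intro p hp j
      rcases hp with hp | hp
      · subst hp; exact hmemIcc μ₀ hμ₀Q j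
      · obtain ⟨i, hp⟩ := Set.mem_iUnion.1 hp
        obtain ⟨s, hp⟩ := Set.mem_iUnion.1 hp
        exact hDmem i s p hp j
    · rintro q ⟨μ, hμ, rfl⟩
      by_cases hμBad : μ ∈ Bad
      · obtain ⟨i, hmem⟩ := Set.mem_iUnion.1 hμBad
        obtain ⟨s, hmem⟩ := Set.mem_iUnion.1 hmem
        obtain ⟨p, hp, hdist⟩ := hDcover i s _ ⟨μ, hmem, rfl⟩
        exact ⟨p, Set.mem_insert_of_mem _ (Set.mem_iUnion.2 ⟨i, Set.mem_iUnion.2 ⟨s, hp⟩⟩), hdist⟩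
      · exact ⟨meanVec μ₀, Set.mem_insert _ _, hclose μ hμ hμBad μ₀ hμ₀Q hμ₀⟩
end

section
/- Let μ = Prod(q) be the product measure on {0,1}^ℕ with q_j = 1/2 for all j, and fix any sample size n ≥ 1. Then, with probability 1 over n i.i.d. samples X^(1),…,X^(n) ∼ μ, there exist infinitely many coordinates j at which all n samples are equal (all 0 or all 1); consequently sup_j |q̂_j − 1/2| = 1/2 almost surely, where q̂_j = (1/n)Σ_{i=1}^n X^(i)_j is the empirical mean, and therefore E_{S∼μ^n} sup_j |q̂_j − 1/2| = 1/2 for every n, so the empirical mean estimator does not converge uniformly even for the singleton collection {μ}. -/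
open MeasureTheory Filter

/-- `μ = Prod q`: the product probability measure on `{0,1}^ι` with independent
coordinates, the `j`-th coordinate having mean `q j`. -/
def IsBernoulliProduct {ι : Type*} (q : ι → ℝ) (μ : Measure (ι → Bool)) : Prop :=
  IsProbabilityMeasure μ ∧
  ∀ (F : Finset ι) (f : ι → Bool),
    μ {x | ∀ j ∈ F, x j = f j} = ∏ j ∈ F, ENNReal.ofReal (if f j then q j else 1 - q j)

/-- The empirical mean at coordinate `j` of `n` samples `S : Fin n → {0,1}^ℕ`. -/
noncomputable def empMean (n : ℕ) (S : Fin n → (ℕ → Bool)) (j : ℕ) : ℝ :=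
  (∑ i : Fin n, if S i j then (1 : ℝ) else 0) / n


lemma coord_half (μ : Measure (ℕ → Bool))
    (hμ : IsBernoulliProduct (fun _ : ℕ => (1 : ℝ) / 2) μ) (m N : ℕ) (c : Fin m → Bool) :
    μ {x | ∀ k : Fin m, x (N + k) = c k} = (2⁻¹ : ENNReal) ^ m := by
  set g : ℕ → Bool := fun j => if h : j - N < m then c ⟨j - N, h⟩ else false with hgdef
  have hg : ∀ k : Fin m, g (N + k) = c k := by
    intro k
    simp only [hgdef]
    rw [show N + (k : ℕ) - N = (k : ℕ) by omega, dif_pos k.2]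
  have h := hμ.2 ((Finset.range m).image (fun k => N + k)) g
  have hset : {x : ℕ → Bool | ∀ j ∈ (Finset.range m).image (fun k => N + k), x j = g j}
      = {x | ∀ k : Fin m, x (N + k) = c k} := by
    ext x
    simp only [Set.mem_setOf_eq, Finset.mem_image, Finset.mem_range]
    constructor
    · intro hx k; rw [← hg k]; exact hx _ ⟨k, k.2, rfl⟩
    · rintro hx j ⟨k, hk, rfl⟩; rw [hg ⟨k, hk⟩]; exact hx ⟨k, hk⟩
  rw [hset] at h
  rw [h]
  have hhalf : ∀ j : ℕ, ENNReal.ofReal (if g j then (1:ℝ)/2 else 1 - 1/2) = 2⁻¹ := by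
    intro j
    have : (if g j then (1:ℝ)/2 else 1 - 1/2) = 1/2 := by cases g j <;> norm_num
    rw [this, one_div, ENNReal.ofReal_inv_of_pos (by norm_num)]
    norm_num
  simp only [hhalf]
  rw [Finset.prod_const, Finset.card_image_of_injective _ (add_right_injective N),
    Finset.card_range]

lemma card_nonconst (n m : ℕ) (hn : 1 ≤ n) :
    Fintype.card {c : Fin n → Fin m → Bool // ∀ k, ¬ ∀ i i' : Fin n, c i k = c i' k}
      = (2 ^ n - 2) ^ m := by
  have e1 : {c : Fin n → Fin m → Bool // ∀ k, ¬ ∀ i i' : Fin n, c i k = c i' k}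
      ≃ {d : Fin m → Fin n → Bool // ∀ k, ¬ ∀ i i' : Fin n, d k i = d k i'} :=
    (Equiv.piComm fun _ _ => Bool).subtypeEquiv (by intro c; rfl)
  have e2 : {d : Fin m → Fin n → Bool // ∀ k, ¬ ∀ i i' : Fin n, d k i = d k i'}
      ≃ ∀ _ : Fin m, {col : Fin n → Bool // ¬ ∀ i i' : Fin n, col i = col i'} :=
    Equiv.subtypePiEquivPi (β := fun _ : Fin m => Fin n → Bool)
      (p := fun _ col => ¬ ∀ i i' : Fin n, col i = col i')
  rw [Fintype.card_congr (e1.trans e2), Fintype.card_pi, Finset.prod_const,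
    Finset.card_univ, Fintype.card_fin]
  congr 1
  have e3 : {col : Fin n → Bool // ∀ i i' : Fin n, col i = col i'} ≃ Bool :=
    { toFun := fun p => p.1 ⟨0, hn⟩
      invFun := fun b => ⟨fun _ => b, fun _ _ => rfl⟩
      left_inv := by rintro ⟨col, h⟩; ext i; exact (h i ⟨0, hn⟩).symm
      right_inv := fun b => rfl }
  rw [Fintype.card_subtype_compl, Fintype.card_fun, Fintype.card_bool, Fintype.card_fin,
    Fintype.card_congr e3, Fintype.card_bool]

lemma tail_zero (μ : Measure (ℕ → Bool))
    (hμ : IsBernoulliProduct (fun _ : ℕ => (1 : ℝ) / 2) μ) (n : ℕ) (hn : 1 ≤ n) (N : ℕ) :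
    (Measure.pi fun _ : Fin n => μ)
      {S | ∀ j, N ≤ j → ¬ ∀ i i' : Fin n, S i j = S i' j} = 0 := by
  haveI := hμ.1
  set ν := Measure.pi fun _ : Fin n => μ with hν
  set r : ENNReal := ((2 ^ n - 2 : ℕ) : ENNReal) * (2⁻¹ : ENNReal) ^ n with hr
  have hbound : ∀ m : ℕ,
      ν {S | ∀ j, N ≤ j → ¬ ∀ i i' : Fin n, S i j = S i' j} ≤ r ^ m := by
    intro m
    have hsub : {S : Fin n → ℕ → Bool | ∀ j, N ≤ j → ¬ ∀ i i' : Fin n, S i j = S i' j}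
        ⊆ ⋃ c : {c : Fin n → Fin m → Bool // ∀ k, ¬ ∀ i i' : Fin n, c i k = c i' k},
            Set.univ.pi (fun i => {x | ∀ k : Fin m, x (N + k) = c.1 i k}) := by
      intro S hS
      refine Set.mem_iUnion.2 ⟨⟨fun i k => S i (N + k), fun k => hS (N + k) (Nat.le_add_right _ _)⟩, ?_⟩
      exact fun i _ => fun k => rfl
    calc ν {S | ∀ j, N ≤ j → ¬ ∀ i i' : Fin n, S i j = S i' j}
        ≤ ∑' c : {c : Fin n → Fin m → Bool // ∀ k, ¬ ∀ i i' : Fin n, c i k = c i' k},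
            ν (Set.univ.pi (fun i => {x | ∀ k : Fin m, x (N + k) = c.1 i k})) :=
          (measure_mono hsub).trans (measure_iUnion_le _)
      _ = ∑' c : {c : Fin n → Fin m → Bool // ∀ k, ¬ ∀ i i' : Fin n, c i k = c i' k},
            ((2⁻¹ : ENNReal) ^ m) ^ n := by
          congr 1; funext c
          rw [hν, Measure.pi_pi]
          simp_rw [coord_half μ hμ m N]
          rw [Finset.prod_const, Finset.card_univ, Fintype.card_fin]
      _ = ((2 ^ n - 2) ^ m : ℕ) * ((2⁻¹ : ENNReal) ^ m) ^ n := by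
          rw [tsum_fintype, Finset.sum_const, Finset.card_univ, card_nonconst n m hn,
            nsmul_eq_mul]
      _ = r ^ m := by
          rw [hr, mul_pow, ← pow_mul, ← pow_mul, Nat.mul_comm, Nat.cast_pow]
  have hrlt : r < 1 := by
    rw [hr, ← ENNReal.inv_pow, ← div_eq_mul_inv]
    rw [ENNReal.div_lt_iff (Or.inl (by positivity)) (Or.inl (by simp))]
    rw [one_mul, show ((2:ENNReal) ^ n) = ((2 ^ n : ℕ) : ENNReal) by push_cast; ring]
    exact_mod_cast Nat.sub_lt (pow_pos (by norm_num : (0:ℕ) < 2) n) (by norm_num)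
  have htend := ENNReal.tendsto_pow_atTop_nhds_zero_of_lt_one hrlt
  exact le_zero_iff.1 (ge_of_tendsto' htend hbound)

lemma pointwise_half (n : ℕ) (hn : 1 ≤ n) (S : Fin n → ℕ → Bool)
    (h : ∀ N, ∃ j, N ≤ j ∧ ∀ i i' : Fin n, S i j = S i' j) :
    {j : ℕ | ∀ i i' : Fin n, S i j = S i' j}.Infinite ∧
      (⨆ j : ℕ, |empMean n S j - 1 / 2|) = 1 / 2 := by
  have hnpos : (0 : ℝ) < n := by exact_mod_cast hn
  have hub : ∀ j, |empMean n S j - 1 / 2| ≤ 1 / 2 := by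
    intro j
    have h0 : (0:ℝ) ≤ ∑ i : Fin n, (if S i j then (1:ℝ) else 0) :=
      Finset.sum_nonneg fun i _ => by split <;> norm_num
    have h1 : ∑ i : Fin n, (if S i j then (1:ℝ) else 0) ≤ n := by
      calc ∑ i : Fin n, (if S i j then (1:ℝ) else 0) ≤ ∑ _i : Fin n, (1:ℝ) :=
            Finset.sum_le_sum fun i _ => by split <;> norm_num
        _ = n := by simp
    have hle1 : empMean n S j ≤ 1 := by
      rw [empMean, div_le_one hnpos]; exact h1
    have hge0 : 0 ≤ empMean n S j := div_nonneg h0 hnpos.le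
    rw [abs_le]; constructor <;> linarith
  have hbdd : BddAbove (Set.range fun j => |empMean n S j - 1 / 2|) :=
    ⟨1/2, by rintro _ ⟨j, rfl⟩; exact hub j⟩
  obtain ⟨j0, -, hj0⟩ := h 0
  have i0 : Fin n := ⟨0, hn⟩
  have hval : |empMean n S j0 - 1 / 2| = 1 / 2 := by
    have hsum : ∀ i : Fin n, (if S i j0 then (1:ℝ) else 0) = (if S i0 j0 then 1 else 0) :=
      fun i => by rw [hj0 i i0]
    rw [empMean, Finset.sum_congr rfl (fun i _ => hsum i), Finset.sum_const,
      Finset.card_univ, Fintype.card_fin, nsmul_eq_mul,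
      mul_div_cancel_left₀ _ (ne_of_gt hnpos)]
    cases S i0 j0 <;> simp <;> norm_num
  constructor
  · apply Set.infinite_of_not_bddAbove
    rintro ⟨b, hb⟩
    obtain ⟨j, hjb, hj⟩ := h (b + 1)
    have := hb hj
    omega
  · refine le_antisymm (ciSup_le hub) ?_
    calc (1/2 : ℝ) = |empMean n S j0 - 1 / 2| := hval.symm
      _ ≤ ⨆ j : ℕ, |empMean n S j - 1 / 2| := le_ciSup hbdd j0

/-- For `μ = Prod(1/2, 1/2, …)` and any sample size `n ≥ 1`: almost surely over `n`
i.i.d. samples there are infinitely many coordinates where all `n` samples agree, hence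
`sup_j |q̂_j − 1/2| = 1/2` almost surely, and consequently the expected uniform deviation
of the empirical mean equals `1/2` — it does not converge even for the singleton
collection `{μ}`. -/
theorem empirical_mean_fails_half (μ : Measure (ℕ → Bool))
    (hμ : IsBernoulliProduct (fun _ : ℕ => (1 : ℝ) / 2) μ) (n : ℕ) (hn : 1 ≤ n) :
    (∀ᵐ S ∂(Measure.pi fun _ : Fin n => μ),
      {j : ℕ | ∀ i i' : Fin n, S i j = S i' j}.Infinite ∧
      (⨆ j : ℕ, |empMean n S j - 1 / 2|) = 1 / 2) ∧
    ∫ S, (⨆ j : ℕ, |empMean n S j - 1 / 2|) ∂(Measure.pi fun _ : Fin n => μ) = 1 / 2 := by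
  haveI := hμ.1
  set ν := Measure.pi fun _ : Fin n => μ with hν
  haveI : IsProbabilityMeasure ν := by rw [hν]; infer_instance
  have hB : ν (⋃ N : ℕ, {S | ∀ j, N ≤ j → ¬ ∀ i i' : Fin n, S i j = S i' j}) = 0 :=
    measure_iUnion_null fun N => tail_zero μ hμ n hn N
  have hae : ∀ᵐ S ∂ν, ∀ N, ∃ j, N ≤ j ∧ ∀ i i' : Fin n, S i j = S i' j := by
    have h2 : ∀ᵐ S ∂ν,
        S ∉ ⋃ N : ℕ, {S | ∀ j, N ≤ j → ¬ ∀ i i' : Fin n, S i j = S i' j} :=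
      measure_eq_zero_iff_ae_notMem.1 hB
    filter_upwards [h2] with S hS N
    by_contra hcon
    push_neg at hcon
    refine hS (Set.mem_iUnion.2 ⟨N, fun j hj hagree => ?_⟩)
    obtain ⟨i, i', hne⟩ := hcon j hj
    exact hne (hagree i i')
  have hmain : ∀ᵐ S ∂ν,
      {j : ℕ | ∀ i i' : Fin n, S i j = S i' j}.Infinite ∧
      (⨆ j : ℕ, |empMean n S j - 1 / 2|) = 1 / 2 := by
    filter_upwards [hae] with S h
    exact pointwise_half n hn S h
  refine ⟨hmain, ?_⟩
  have hae2 : (fun S => ⨆ j : ℕ, |empMean n S j - 1 / 2|) =ᵐ[ν] fun _ => (1/2 : ℝ) := by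
    filter_upwards [hmain] with S h
    exact h.2
  rw [integral_congr_ae hae2, integral_const]
  simp
end
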